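/- arXiv:2603.24707 — 3 statements merged into one kernel-verified Lean document; each statement's English description precedes it below -/
import Mathlib

section
/- If g : Δ_j → ℝ is continuously differentiable on Δ_j, then |∫_{t_{j-1}}^{t_j} g(t) Φ_j(t) dt| ≤ (sup_{t∈Δ_j} |g'(t)|) · h^{2r+3}. -/
open Set MeasureTheory

/-- Equidistant interpolation nodes: `τ_j^i = t_{j-1} + i·h/(2r)` with `h = 1/n`. -/
noncomputable def tau (n r j i : ℕ) : ℝ :=
  ((j : ℝ) - 1) / n + (i : ℝ) / (2 * r * n)

/-- The unique polynomial of degree ≤ 2r interpolating `x` at the nodes of `Δ_j`. -/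
noncomputable def interpPoly (n r j : ℕ) (x : ℝ → ℝ) : Polynomial ℝ :=
  Lagrange.interpolate (Finset.range (2 * r + 1)) (tau n r j) (fun i => x (tau n r j i))

/-- The interpolatory projection `Q_n x`: on each subinterval `Δ_j = [(j-1)/n, j/n]` it
coincides with the polynomial of degree ≤ 2r interpolating `x` at the nodes `τ_j^i`.
(At a partition point both adjacent pieces take the value `x(t_j)`.) -/
noncomputable def Qn (n r : ℕ) (x : ℝ → ℝ) (t : ℝ) : ℝ :=
  (interpPoly n r (min n (⌊t * (n : ℝ)⌋₊ + 1)) x).eval t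

/-- The Fredholm integral operator with kernel `κ`. -/
noncomputable def Kop (κ : ℝ → ℝ → ℝ) (x : ℝ → ℝ) (s : ℝ) : ℝ :=
  ∫ t in (0:ℝ)..1, κ s t * x t

/-- Supremum norm on `[0,1]`. -/
noncomputable def supNorm (f : ℝ → ℝ) : ℝ :=
  ⨆ t : Set.Icc (0:ℝ) 1, |f t.1|

/-- The nodal polynomial `Φ_j(t) = ∏_{i=0}^{2r} (t − τ_j^i)`. -/
noncomputable def Phi (n r j : ℕ) (t : ℝ) : ℝ :=
  ∏ i ∈ Finset.range (2 * r + 1), (t - tau n r j i)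

/-- `‖x‖_{k,∞} = max_{0 ≤ i ≤ k} ‖x^{(i)}‖_∞` (derivatives taken within `[0,1]`). -/
noncomputable def cknorm (k : ℕ) (x : ℝ → ℝ) : ℝ :=
  ⨆ i : Fin (k + 1), supNorm (iteratedDerivWithin i x (Set.Icc 0 1))

theorem stmt_9 (n r : ℕ) (hn : 1 ≤ n) (hr : 1 ≤ r) (j : ℕ) (hj1 : 1 ≤ j) (hjn : j ≤ n)
    (g g' : ℝ → ℝ)
    (hg : ∀ t ∈ Set.Icc (((j : ℝ) - 1) / n) ((j : ℝ) / n),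
      HasDerivWithinAt g (g' t) (Set.Icc (((j : ℝ) - 1) / n) ((j : ℝ) / n)) t)
    (hg' : ContinuousOn g' (Set.Icc (((j : ℝ) - 1) / n) ((j : ℝ) / n))) :
    |∫ t in (((j : ℝ) - 1) / n)..((j : ℝ) / n), g t * Phi n r j t| ≤
      (⨆ t : Set.Icc (((j : ℝ) - 1) / n) ((j : ℝ) / n), |g' t.1|) *
        ((1 : ℝ) / n) ^ (2 * r + 3) := by

  have hn0 : (0:ℝ) < n := by exact_mod_cast hn
  have hr0 : (0:ℝ) < r := by exact_mod_cast hr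
  set a : ℝ := ((j : ℝ) - 1) / n with ha
  set b : ℝ := (j : ℝ) / n with hb
  have hba : b - a = 1 / n := by rw [ha, hb]; field_simp; ring
  have hh : (0:ℝ) < 1 / n := by positivity
  have hab : a ≤ b := by linarith
  -- nodes lie in [a,b]
  have htau : ∀ i ∈ Finset.range (2 * r + 1), tau n r j i ∈ Set.Icc a b := by
    intro i hi
    have hi' : (i : ℝ) ≤ 2 * r := by
      have := Finset.mem_range.mp hi
      have : i ≤ 2 * r := by omega
      exact_mod_cast this
    constructor
    · rw [ha]; unfold tau; have : (0:ℝ) ≤ (i : ℝ) / (2 * r * n) := by positivity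
      linarith
    · unfold tau
      have h1 : (i : ℝ) / (2 * r * n) ≤ 1 / n := by
        rw [div_le_div_iff₀ (by positivity) hn0]
        nlinarith
      rw [ha] at *; linarith
  -- bound on Phi
  have hPhiB : ∀ t ∈ Set.Icc a b, |Phi n r j t| ≤ (1 / n) ^ (2 * r + 1) := by
    intro t ht
    unfold Phi
    rw [Finset.abs_prod]
    calc ∏ i ∈ Finset.range (2 * r + 1), |t - tau n r j i|
        ≤ ∏ _i ∈ Finset.range (2 * r + 1), (1 / (n:ℝ)) := by
          apply Finset.prod_le_prod
          · intro i _; exact abs_nonneg _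
          · intro i hi
            have hτ := htau i hi
            rw [abs_sub_le_iff]
            constructor <;> [skip; skip] <;>
              · have h1 := ht.1; have h2 := ht.2
                have h3 := hτ.1; have h4 := hτ.2
                linarith
      _ = (1 / n) ^ (2 * r + 1) := by rw [Finset.prod_const, Finset.card_range]
  -- oddness of Phi about the midpoint
  have hodd : ∀ t : ℝ, Phi n r j (a + b - t) = - Phi n r j t := by
    intro t
    unfold Phi
    have hstep : ∀ i ∈ Finset.range (2 * r + 1),
        (a + b - t - tau n r j i) = (tau n r j (2 * r - i) - t) := by
      intro i hi
      have hi' : i ≤ 2 * r := by have := Finset.mem_range.mp hi; omega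
      unfold tau
      rw [ha, hb]
      have hc : ((2 * r - i : ℕ) : ℝ) = 2 * (r:ℝ) - i := by
        push_cast [Nat.cast_sub hi']; ring
      rw [hc]
      field_simp
      ring
    rw [Finset.prod_congr rfl hstep]
    have hrefl : ∏ i ∈ Finset.range (2 * r + 1), (tau n r j (2 * r - i) - t)
        = ∏ i ∈ Finset.range (2 * r + 1), (tau n r j i - t) := by
      have := Finset.prod_range_reflect (fun i => tau n r j i - t) (2 * r + 1)
      simpa using this
    rw [hrefl]
    have : ∀ i : ℕ, tau n r j i - t = (-1) * (t - tau n r j i) := fun i => by ring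
    simp_rw [this, Finset.prod_mul_distrib, Finset.prod_const, Finset.card_range]
    have hoddpow : (-1 : ℝ) ^ (2 * r + 1) = -1 := Odd.neg_one_pow ⟨r, by ring⟩
    rw [hoddpow]; ring
  -- continuity facts
  have hgc : ContinuousOn g (Set.Icc a b) := fun t ht => (hg t ht).continuousWithinAt
  have hPc : Continuous (Phi n r j) := by
    unfold Phi
    exact continuous_finset_prod _ (fun i _ => continuous_id.sub continuous_const)
  -- integral of Phi vanishes
  have hI : ∫ t in a..b, Phi n r j t = 0 := by
    have h1 : ∫ t in a..b, Phi n r j (a + b - t) = ∫ t in a..b, Phi n r j t := by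
      rw [intervalIntegral.integral_comp_sub_left (Phi n r j) (a + b)]
      rw [add_sub_cancel_right, add_sub_cancel_left]
    have h2 : ∫ t in a..b, Phi n r j (a + b - t) = - ∫ t in a..b, Phi n r j t := by
      simp_rw [hodd]
      exact intervalIntegral.integral_neg
    linarith
  -- the sup bound on g'
  set M : ℝ := ⨆ t : Set.Icc a b, |g' t.1| with hMdef
  have hbdd : BddAbove (Set.range fun t : Set.Icc a b => |g' t.1|) := by
    have hc : IsCompact (Set.Icc a b) := isCompact_Icc
    have himg : BddAbove ((fun t => |g' t|) '' Set.Icc a b) :=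
      (hc.image_of_continuousOn (hg'.abs)).bddAbove
    have : (Set.range fun t : Set.Icc a b => |g' t.1|) = (fun t => |g' t|) '' Set.Icc a b := by
      ext y; simp [Set.mem_image]
    rwa [this]
  have hM : ∀ t ∈ Set.Icc a b, |g' t| ≤ M := fun t ht => le_ciSup hbdd ⟨t, ht⟩
  have hM0 : 0 ≤ M := le_trans (abs_nonneg _) (hM a ⟨le_refl a, hab⟩)
  set c : ℝ := (a + b) / 2 with hc
  have hcmem : c ∈ Set.Icc a b := ⟨by rw [hc]; linarith, by rw [hc]; linarith⟩
  have hgdiff : ∀ t ∈ Set.Icc a b, |g t - g c| ≤ M * (1 / (2 * n)) := by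
    intro t ht
    have key := (convex_Icc a b).norm_image_sub_le_of_norm_hasDerivWithin_le
      (fun x hx => hg x hx) (fun x hx => by rw [Real.norm_eq_abs]; exact hM x hx) hcmem ht
    rw [Real.norm_eq_abs, Real.norm_eq_abs] at key
    have htc : |t - c| ≤ 1 / (2 * n) := by
      rw [abs_sub_le_iff, hc]
      constructor <;>
        · have h1 := ht.1; have h2 := ht.2
          have : 1 / (2 * (n:ℝ)) = (1 / n) / 2 := by ring
          rw [this]; linarith
    calc |g t - g c| ≤ M * |t - c| := key
      _ ≤ M * (1 / (2 * n)) := by exact mul_le_mul_of_nonneg_left htc hM0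
  -- integrability
  have hint1 : IntervalIntegrable (fun t => g t * Phi n r j t) volume a b := by
    apply ContinuousOn.intervalIntegrable
    rw [Set.uIcc_of_le hab]
    exact hgc.mul hPc.continuousOn
  have hintP : IntervalIntegrable (fun t => g c * Phi n r j t) volume a b :=
    ((hPc.intervalIntegrable a b).const_mul _)
  -- decomposition
  have key : ∫ t in a..b, g t * Phi n r j t = ∫ t in a..b, (g t - g c) * Phi n r j t := by
    simp_rw [sub_mul]
    rw [intervalIntegral.integral_sub hint1 hintP, intervalIntegral.integral_const_mul, hI,
      mul_zero, sub_zero]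
  rw [key]
  have hnorm : ‖∫ t in a..b, (g t - g c) * Phi n r j t‖ ≤
      (M * (1 / (2 * n)) * (1 / n) ^ (2 * r + 1)) * |b - a| := by
    apply intervalIntegral.norm_integral_le_of_norm_le_const
    intro x hx
    rw [Set.uIoc_of_le hab] at hx
    have hx' : x ∈ Set.Icc a b := Set.Ioc_subset_Icc_self hx
    rw [Real.norm_eq_abs, abs_mul]
    exact mul_le_mul (hgdiff x hx') (hPhiB x hx') (abs_nonneg _)
      (by positivity)
  rw [Real.norm_eq_abs, hba] at hnorm
  have habs : |(1:ℝ) / n| = 1 / n := abs_of_pos hh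
  rw [habs] at hnorm
  calc |∫ t in a..b, (g t - g c) * Phi n r j t|
      ≤ M * (1 / (2 * n)) * (1 / n) ^ (2 * r + 1) * (1 / n) := hnorm
    _ ≤ M * (1 / n) ^ (2 * r + 3) := by
        have hp : (0:ℝ) < (1 / n) ^ (2 * r + 1) := pow_pos hh _
        have : ((1:ℝ) / n) ^ (2 * r + 3) = (1 / n) ^ (2 * r + 1) * ((1 / n) * (1 / n)) := by
          rw [show 2 * r + 3 = (2 * r + 1) + 2 by ring, pow_add]; ring
        rw [this]
        have h2n : 1 / (2 * (n:ℝ)) ≤ 1 / n := by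
          rw [div_le_div_iff₀ (by positivity) hn0]; linarith
        nlinarith [mul_le_mul_of_nonneg_right (mul_le_mul_of_nonneg_left h2n hM0) (mul_nonneg hp.le hh.le)]
end

section
/- Suppose all partial derivatives D^{(α,β)}κ = ∂^{α+β}κ/∂s^α∂t^β with 0 ≤ α+β ≤ 2r+3 exist, are continuous on [0,1]×[0,1], and satisfy |D^{(α,β)}κ(s,t)| ≤ C₂. Then there exists a constant C₃ > 0, depending only on r and C₂ and independent of n, such that for every (2r+2)-times continuously differentiable x : [0,1] → ℝ, ‖(K(x − Q_n x))^{(2r+1)}‖_∞ ≤ C₃ ‖x‖_{2r+2,∞} h^{2r+2}. -/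
set_option linter.unusedSectionVars false
set_option maxHeartbeats 1000000


open Set MeasureTheory

section Tau

variable {n r : ℕ} (hn : 1 ≤ n) (hr : 1 ≤ r)

lemma rn_pos (hn : 1 ≤ n) (hr : 1 ≤ r) : (0:ℝ) < 2 * r * n := by
  have h1 : (1:ℝ) ≤ r := by exact_mod_cast hr
  have h2 : (1:ℝ) ≤ n := by exact_mod_cast hn
  nlinarith

lemma tau_sub (j i k : ℕ) : tau n r j i - tau n r j k = ((i:ℝ) - k) / (2 * r * n) := by
  unfold tau; ring

lemma tau_zero (j : ℕ) : tau n r j 0 = ((j:ℝ) - 1) / n := by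
  unfold tau; simp

include hn hr in
lemma tau_injOn (j : ℕ) : Set.InjOn (tau n r j) (Finset.range (2 * r + 1)) := by
  intro i _ k _ hik
  have h := tau_sub (n := n) (r := r) j i k
  rw [hik, sub_self] at h
  have hpos := rn_pos hn hr
  have : (i:ℝ) - k = 0 := by
    field_simp at h
    linarith [h]
  have : (i:ℝ) = k := by linarith
  exact_mod_cast this

include hn hr in
lemma tau_mem_Icc {j i : ℕ} (hi : i ≤ 2 * r) :
    tau n r j i ∈ Icc (((j:ℝ) - 1) / n) (((j:ℝ) - 1) / n + 1 / n) := by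
  have hpos := rn_pos hn hr
  have hnpos : (0:ℝ) < n := by exact_mod_cast hn
  constructor
  · unfold tau
    have : (0:ℝ) ≤ (i:ℝ) / (2 * r * n) := by positivity
    linarith
  · unfold tau
    have hile : (i:ℝ) ≤ 2 * r := by exact_mod_cast hi
    have h1 : (i:ℝ) / (2 * r * n) ≤ (2 * r) / (2 * r * n) := by
      gcongr
    have h2 : ((2:ℝ) * r) / (2 * r * n) = 1 / n := by
      rw [div_eq_div_iff hpos.ne' hnpos.ne']; ring
    linarith

include hn hr in
lemma subint_mem_Icc01 {j : ℕ} (hj1 : 1 ≤ j) (hjn : j ≤ n) :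
    Icc (((j:ℝ) - 1) / n) (((j:ℝ) - 1) / n + 1 / n) ⊆ Icc (0:ℝ) 1 := by
  have hnpos : (0:ℝ) < n := by exact_mod_cast hn
  have hj1' : (1:ℝ) ≤ j := by exact_mod_cast hj1
  have hjn' : (j:ℝ) ≤ n := by exact_mod_cast hjn
  apply Icc_subset_Icc
  · apply div_nonneg _ hnpos.le; linarith
  · rw [← add_div, div_le_one hnpos]; linarith

end Tau

section Transfer

/-- Transfer of iterated derivatives from a bigger unique-diff set to a smaller one. -/
lemma eqOn_iteratedDerivWithin {f : ℝ → ℝ} {s t : Set ℝ} (hst : s ⊆ t)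
    (hs : UniqueDiffOn ℝ s) (ht : UniqueDiffOn ℝ t) {N : ℕ} (hf : ContDiffOn ℝ N f t) :
    ∀ i : ℕ, i ≤ N → Set.EqOn (iteratedDerivWithin i f s) (iteratedDerivWithin i f t) s := by
  intro i
  induction i with
  | zero => intro _ y hy; simp
  | succ k ih =>
    intro hk y hy
    have hk' : k ≤ N := Nat.le_of_succ_le hk
    have hdiff : DifferentiableOn ℝ (iteratedDerivWithin k f t) t :=
      hf.differentiableOn_iteratedDerivWithin (by exact_mod_cast hk) ht
    rw [iteratedDerivWithin_succ, iteratedDerivWithin_succ]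
    have h1 : derivWithin (iteratedDerivWithin k f s) s y
        = derivWithin (iteratedDerivWithin k f t) s y :=
      derivWithin_congr (ih hk') (ih hk' hy)
    rw [h1]
    exact ((hdiff y (hst hy)).hasDerivWithinAt.mono hst).derivWithin (hs y hy)

end Transfer

section SupNormFacts

lemma supNorm_le {f : ℝ → ℝ} {M : ℝ} (hM : 0 ≤ M)
    (h : ∀ t ∈ Icc (0:ℝ) 1, |f t| ≤ M) : supNorm f ≤ M := by
  unfold supNorm
  exact Real.iSup_le (fun t => h t.1 t.2) hM

lemma le_supNorm {f : ℝ → ℝ} (hf : ContinuousOn f (Icc 0 1)) {t : ℝ}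
    (ht : t ∈ Icc (0:ℝ) 1) : |f t| ≤ supNorm f := by
  unfold supNorm
  have hbdd : BddAbove (Set.range fun t : Icc (0:ℝ) 1 => |f t.1|) := by
    obtain ⟨M, hM⟩ := IsCompact.exists_bound_of_continuousOn isCompact_Icc hf
    exact ⟨M, by rintro y ⟨u, rfl⟩; simpa using hM u.1 u.2⟩
  exact le_ciSup hbdd (⟨t, ht⟩ : Icc (0:ℝ) 1)

lemma supNorm_le_cknorm {k i : ℕ} (hik : i ≤ k) (x : ℝ → ℝ) :
    supNorm (iteratedDerivWithin i x (Icc 0 1)) ≤ cknorm k x := by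
  unfold cknorm
  have hbdd : BddAbove (Set.range fun i : Fin (k+1) =>
      supNorm (iteratedDerivWithin i x (Icc 0 1))) := (Set.finite_range _).bddAbove
  exact le_ciSup hbdd (⟨i, Nat.lt_succ_of_le hik⟩ : Fin (k+1))

lemma abs_iteratedDerivWithin_le_cknorm {k i : ℕ} (hik : i ≤ k) {x : ℝ → ℝ}
    (hx : ContDiffOn ℝ k x (Icc 0 1)) {t : ℝ} (ht : t ∈ Icc (0:ℝ) 1) :
    |iteratedDerivWithin i x (Icc 0 1) t| ≤ cknorm k x :=
  le_trans (le_supNorm (hx.continuousOn_iteratedDerivWithin (by exact_mod_cast hik)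
    (uniqueDiffOn_Icc one_pos)) ht) (supNorm_le_cknorm hik x)

lemma cknorm_nonneg {k : ℕ} {x : ℝ → ℝ} (hx : ContDiffOn ℝ k x (Icc 0 1)) :
    0 ≤ cknorm k x :=
  le_trans (abs_nonneg _) (abs_iteratedDerivWithin_le_cknorm (Nat.zero_le k) hx
    (by norm_num : (0:ℝ) ∈ Icc (0:ℝ) 1))

end SupNormFacts
section Interp

variable {n r : ℕ}

/-- Stability (Lebesgue-constant) bound for the Lagrange interpolant on `Δ_j`. -/
lemma interp_eval_bound (hn : 1 ≤ n) (hr : 1 ≤ r) (j : ℕ) {c : ℕ → ℝ} {M : ℝ}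
    (hM : ∀ i ∈ Finset.range (2 * r + 1), |c i| ≤ M) {t : ℝ}
    (ht : t ∈ Icc (((j:ℝ) - 1) / n) (((j:ℝ) - 1) / n + 1 / n)) :
    |(Lagrange.interpolate (Finset.range (2 * r + 1)) (tau n r j) c).eval t|
      ≤ (2 * r + 1) * (2 * r : ℝ) ^ (2 * r) * M := by
  have hrn := rn_pos hn hr
  have hnpos : (0:ℝ) < n := by exact_mod_cast hn
  have hMnn : 0 ≤ M := le_trans (abs_nonneg _) (hM 0 (by simp))
  rw [Lagrange.interpolate_apply, Polynomial.eval_finset_sum]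
  calc |∑ i ∈ Finset.range (2 * r + 1),
          Polynomial.eval t (Polynomial.C (c i) * Lagrange.basis (Finset.range (2*r+1)) (tau n r j) i)|
      ≤ ∑ i ∈ Finset.range (2 * r + 1),
          |Polynomial.eval t (Polynomial.C (c i) * Lagrange.basis (Finset.range (2*r+1)) (tau n r j) i)| :=
        Finset.abs_sum_le_sum_abs _ _
    _ ≤ ∑ _i ∈ Finset.range (2 * r + 1), (2 * r : ℝ) ^ (2 * r) * M := by
        apply Finset.sum_le_sum
        intro i hi
        rw [Polynomial.eval_mul, Polynomial.eval_C, abs_mul]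
        have hbasis : |Polynomial.eval t (Lagrange.basis (Finset.range (2*r+1)) (tau n r j) i)|
            ≤ (2 * r : ℝ) ^ (2 * r) := by
          unfold Lagrange.basis
          rw [Polynomial.eval_prod, Finset.abs_prod]
          have hcard : ((Finset.range (2*r+1)).erase i).card = 2 * r := by
            rw [Finset.card_erase_of_mem hi, Finset.card_range]; omega
          calc ∏ k ∈ (Finset.range (2*r+1)).erase i,
                  |Polynomial.eval t (Lagrange.basisDivisor (tau n r j i) (tau n r j k))|
              ≤ ∏ _k ∈ (Finset.range (2*r+1)).erase i, (2 * r : ℝ) := by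
                apply Finset.prod_le_prod (fun k _ => abs_nonneg _)
                intro k hk
                have hki : k ≠ i := Finset.ne_of_mem_erase hk
                have hkmem : k ∈ Finset.range (2*r+1) := Finset.mem_of_mem_erase hk
                have hkle : k ≤ 2 * r := Nat.lt_succ_iff.mp (Finset.mem_range.mp hkmem)
                unfold Lagrange.basisDivisor
                rw [Polynomial.eval_mul, Polynomial.eval_C, abs_mul]
                have h1 : |Polynomial.eval t (Polynomial.X - Polynomial.C (tau n r j k))| ≤ 1 / n := by
                  simp only [Polynomial.eval_sub, Polynomial.eval_X, Polynomial.eval_C]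
                  have hτ := tau_mem_Icc hn hr (j := j) hkle
                  rw [abs_le]
                  constructor <;> [linarith [ht.1, hτ.2]; linarith [ht.2, hτ.1]]
                have h2 : |(tau n r j i - tau n r j k)⁻¹| ≤ 2 * r * n := by
                  rw [abs_inv]
                  have hik : |tau n r j i - tau n r j k| ≥ 1 / (2 * r * n) := by
                    rw [tau_sub, abs_div, abs_of_pos hrn]
                    gcongr
                    have : (i:ℝ) ≠ k := by
                      intro hc; exact hki (by exact_mod_cast hc.symm)
                    have h3 : (1:ℝ) ≤ |(i:ℝ) - k| := by
                      rw [show (i:ℝ) - (k:ℝ) = ((i - k : ℤ) : ℝ) by push_cast; ring,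
                        ← Int.cast_abs]
                      have hz : (i : ℤ) - k ≠ 0 := by omega
                      have h4 : (1:ℤ) ≤ |(i:ℤ) - k| := Int.one_le_abs hz
                      exact_mod_cast h4
                    linarith
                  calc |tau n r j i - tau n r j k|⁻¹ ≤ (1 / (2 * (r:ℝ) * n))⁻¹ := by
                        apply inv_anti₀ (by positivity) hik
                    _ = 2 * (r:ℝ) * n := by
                        rw [one_div, inv_inv]
                calc |(tau n r j i - tau n r j k)⁻¹|
                      * |Polynomial.eval t (Polynomial.X - Polynomial.C (tau n r j k))|
                    ≤ (2 * r * n) * (1 / n) := by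
                      apply mul_le_mul h2 h1 (abs_nonneg _) (by positivity)
                  _ = 2 * r := by field_simp
            _ = (2 * r : ℝ) ^ (2 * r) := by rw [Finset.prod_const, hcard]
        calc |c i| * |Polynomial.eval t (Lagrange.basis (Finset.range (2*r+1)) (tau n r j) i)|
            ≤ M * (2 * r : ℝ) ^ (2 * r) := by
              apply mul_le_mul (hM i hi) hbasis (abs_nonneg _) hMnn
          _ = (2 * r : ℝ) ^ (2 * r) * M := by ring
    _ = (2 * r + 1) * (2 * r : ℝ) ^ (2 * r) * M := by
        rw [Finset.sum_const, Finset.card_range]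
        push_cast; ring

end Interp
section QnPhi

variable {n r : ℕ}

lemma qn_eq_interp (hn : 1 ≤ n) {j : ℕ} (hj1 : 1 ≤ j) (hjn : j ≤ n) (x : ℝ → ℝ) {t : ℝ}
    (ht : t ∈ Ioo (((j:ℝ) - 1) / n) (((j:ℝ) - 1) / n + 1 / n)) :
    Qn n r x t = (interpPoly n r j x).eval t := by
  have hnpos : (0:ℝ) < n := by exact_mod_cast hn
  have hfloor : ⌊t * (n:ℝ)⌋₊ = j - 1 := by
    have h1 : ((j:ℝ) - 1) < t * n := by
      have := ht.1
      calc ((j:ℝ) - 1) = (((j:ℝ) - 1) / n) * n := by field_simp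
        _ < t * n := by apply mul_lt_mul_of_pos_right this hnpos
    have h2 : t * n < j := by
      have := ht.2
      calc t * n < ((((j:ℝ) - 1) / n) + 1 / n) * n := by
            apply mul_lt_mul_of_pos_right this hnpos
        _ = j := by field_simp; ring
    rw [Nat.floor_eq_iff]
    · constructor
      · rw [Nat.cast_sub hj1]; push_cast; linarith
      · rw [Nat.cast_sub hj1]; push_cast; linarith
    · have hj1' : (1:ℝ) ≤ j := by exact_mod_cast hj1
      nlinarith [ht.1, hnpos, hj1']
  unfold Qn
  rw [hfloor, Nat.sub_add_cancel hj1, min_eq_right hjn]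

lemma phi_bound (hn : 1 ≤ n) (hr : 1 ≤ r) {j : ℕ} {t : ℝ}
    (ht : t ∈ Icc (((j:ℝ) - 1) / n) (((j:ℝ) - 1) / n + 1 / n)) :
    |∏ i ∈ Finset.range (2 * r + 1), (t - tau n r j i)| ≤ (1 / n) ^ (2 * r + 1) := by
  rw [Finset.abs_prod]
  have : ∀ i ∈ Finset.range (2 * r + 1), |t - tau n r j i| ≤ 1 / n := by
    intro i hi
    have hile : i ≤ 2 * r := Nat.lt_succ_iff.mp (Finset.mem_range.mp hi)
    have hτ := tau_mem_Icc hn hr (j := j) hile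
    rw [abs_le]
    constructor <;> [linarith [ht.1, hτ.2]; linarith [ht.2, hτ.1]]
  calc ∏ i ∈ Finset.range (2 * r + 1), |t - tau n r j i|
      ≤ ∏ _i ∈ Finset.range (2 * r + 1), (1 / (n:ℝ)) :=
        Finset.prod_le_prod (fun i _ => abs_nonneg _) this
    _ = (1 / (n:ℝ)) ^ (2 * r + 1) := by rw [Finset.prod_const, Finset.card_range]

lemma phi_integral_zero (hn : 1 ≤ n) (hr : 1 ≤ r) (j : ℕ) :
    ∫ t in (((j:ℝ) - 1) / n)..((((j:ℝ) - 1) / n) + 1 / n),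
      ∏ i ∈ Finset.range (2 * r + 1), (t - tau n r j i) = 0 := by
  have hrn := rn_pos hn hr
  have hnpos : (0:ℝ) < n := by exact_mod_cast hn
  set a := ((j:ℝ) - 1) / n with ha
  set δ := 1 / (2 * (r:ℝ) * n) with hδ
  set c := (r:ℝ) * δ with hc
  have hcval : c = 1 / (2 * n) := by
    rw [hc, hδ]
    field_simp
  set m := a + c with hm
  set d : ℕ → ℝ := fun i => (i:ℝ) * δ - c with hd
  have htau : ∀ i : ℕ, tau n r j i = m + d i := by
    intro i
    rw [hm, hd, hc, hδ]
    unfold tau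
    rw [ha]
    field_simp
    ring
  set g : ℝ → ℝ := fun u => ∏ i ∈ Finset.range (2 * r + 1), (u - d i) with hg
  have hgc : Continuous g := by
    apply continuous_finset_prod
    intro i _
    exact continuous_id.sub continuous_const
  have hodd : ∀ u : ℝ, g (-u) = - g u := by
    intro u
    rw [hg]
    simp only
    have h1 : ∀ i ∈ Finset.range (2 * r + 1), (-u - d i) = (-1) * (u + d i) := by
      intro i _; ring
    rw [Finset.prod_congr rfl h1, Finset.prod_mul_distrib, Finset.prod_const,
      Finset.card_range]
    have h2 : ∀ i ∈ Finset.range (2 * r + 1), u + d i = u - d (2 * r - i) := by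
      intro i hi
      have hile : i ≤ 2 * r := Nat.lt_succ_iff.mp (Finset.mem_range.mp hi)
      rw [hd]
      simp only
      rw [Nat.cast_sub hile, hc]
      push_cast
      ring
    rw [Finset.prod_congr rfl h2]
    have h3 : ∏ i ∈ Finset.range (2 * r + 1), (u - d (2 * r - i))
        = ∏ i ∈ Finset.range (2 * r + 1), (u - d i) := by
      have := Finset.prod_range_reflect (fun i => u - d i) (2 * r + 1)
      simpa using this
    rw [h3]
    have : (-1 : ℝ) ^ (2 * r + 1) = -1 := Odd.neg_one_pow ⟨r, by ring⟩
    rw [this]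
    ring
  have hshift : (∫ t in a..(a + 1/n), ∏ i ∈ Finset.range (2 * r + 1), (t - tau n r j i))
      = ∫ u in (-c)..c, g u := by
    have h2c : a + 1/n = m + c := by
      rw [hm, hcval]; field_simp; ring
    have heq : ∀ u : ℝ, (∏ i ∈ Finset.range (2 * r + 1), ((u + m) - tau n r j i)) = g u := by
      intro u
      rw [hg]
      apply Finset.prod_congr rfl
      intro i _
      rw [htau i]; ring
    calc (∫ t in a..(a + 1/n), ∏ i ∈ Finset.range (2 * r + 1), (t - tau n r j i))
        = ∫ t in ((-c) + m)..(c + m), ∏ i ∈ Finset.range (2 * r + 1), (t - tau n r j i) := by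
          rw [show (-c) + m = a by rw [hm]; ring, show c + m = a + 1/n by rw [h2c]; ring]
      _ = ∫ u in (-c)..c, ∏ i ∈ Finset.range (2 * r + 1), ((u + m) - tau n r j i) := by
          rw [intervalIntegral.integral_comp_add_right
            (fun t => ∏ i ∈ Finset.range (2 * r + 1), (t - tau n r j i)) m]
      _ = ∫ u in (-c)..c, g u := by
          apply intervalIntegral.integral_congr
          intro u _
          exact heq u
  rw [hshift]
  have hint : ∀ p q : ℝ, IntervalIntegrable g volume p q := fun p q =>
    hgc.intervalIntegrable p q
  have hsplit : (∫ u in (-c)..c, g u) = (∫ u in (-c)..(0:ℝ), g u) + ∫ u in (0:ℝ)..c, g u :=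
    (intervalIntegral.integral_add_adjacent_intervals (hint _ _) (hint _ _)).symm
  have hneg : (∫ u in (-c)..(0:ℝ), g u) = - ∫ u in (0:ℝ)..c, g u := by
    have h1 : (∫ u in (-c)..(0:ℝ), g u) = ∫ u in (-c)..(0:ℝ), -g (-u) := by
      apply intervalIntegral.integral_congr
      intro u _
      show g u = -g (-u)
      rw [hodd]; ring
    rw [h1, intervalIntegral.integral_neg, intervalIntegral.integral_comp_neg g]
    norm_num
  rw [hsplit, hneg]
  ring

end QnPhi
section TaylorPoly

/-- The Taylor polynomial of degree `N` at `a` (derivatives within `s`) as a `Polynomial ℝ`. -/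
noncomputable def taylorPoly (x : ℝ → ℝ) (N : ℕ) (s : Set ℝ) (a : ℝ) : Polynomial ℝ :=
  ∑ i ∈ Finset.range (N + 1),
    Polynomial.C (iteratedDerivWithin i x s a / (i.factorial : ℝ)) * (Polynomial.X - Polynomial.C a) ^ i

lemma taylorPoly_eval (x : ℝ → ℝ) (N : ℕ) (s : Set ℝ) (a t : ℝ) :
    (taylorPoly x N s a).eval t = taylorWithinEval x N s a t := by
  rw [taylor_within_apply]
  unfold taylorPoly
  rw [Polynomial.eval_finset_sum]
  apply Finset.sum_congr rfl
  intro i _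
  rw [Polynomial.eval_mul, Polynomial.eval_C, Polynomial.eval_pow, Polynomial.eval_sub,
    Polynomial.eval_X, Polynomial.eval_C, smul_eq_mul]
  ring

lemma taylorPoly_natDegree_le (x : ℝ → ℝ) (N : ℕ) (s : Set ℝ) (a : ℝ) :
    (taylorPoly x N s a).natDegree ≤ N := by
  unfold taylorPoly
  apply Polynomial.natDegree_sum_le_of_forall_le
  intro i hi
  have h1 : ((Polynomial.X - Polynomial.C a) ^ i).natDegree = i := by
    rw [Polynomial.natDegree_pow, Polynomial.natDegree_X_sub_C, mul_one]
  calc (Polynomial.C (iteratedDerivWithin i x s a / (i.factorial : ℝ))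
        * (Polynomial.X - Polynomial.C a) ^ i).natDegree
      ≤ ((Polynomial.X - Polynomial.C a) ^ i).natDegree := Polynomial.natDegree_C_mul_le _ _
    _ = i := h1
    _ ≤ N := Nat.lt_succ_iff.mp (Finset.mem_range.mp hi)

lemma taylorPoly_coeff_top (x : ℝ → ℝ) (N : ℕ) (s : Set ℝ) (a : ℝ) :
    (taylorPoly x N s a).coeff N = iteratedDerivWithin N x s a / (N.factorial : ℝ) := by
  unfold taylorPoly
  rw [Polynomial.finset_sum_coeff, Finset.sum_range_succ]
  have h0 : ∀ i ∈ Finset.range N,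
      (Polynomial.C (iteratedDerivWithin i x s a / (i.factorial : ℝ))
        * (Polynomial.X - Polynomial.C a) ^ i).coeff N = 0 := by
    intro i hi
    apply Polynomial.coeff_eq_zero_of_natDegree_lt
    calc (Polynomial.C _ * (Polynomial.X - Polynomial.C a) ^ i).natDegree
        ≤ ((Polynomial.X - Polynomial.C a) ^ i).natDegree := Polynomial.natDegree_C_mul_le _ _
      _ = i := by rw [Polynomial.natDegree_pow, Polynomial.natDegree_X_sub_C, mul_one]
      _ < N := Finset.mem_range.mp hi
  rw [Finset.sum_eq_zero h0, zero_add, Polynomial.coeff_C_mul]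
  have hmonic : ((Polynomial.X - Polynomial.C a) ^ N).Monic := (Polynomial.monic_X_sub_C a).pow N
  have hdeg : ((Polynomial.X - Polynomial.C a) ^ N).natDegree = N := by
    rw [Polynomial.natDegree_pow, Polynomial.natDegree_X_sub_C, mul_one]
  have := hmonic.coeff_natDegree
  rw [hdeg] at this
  rw [this, mul_one]

end TaylorPoly

section Factor

variable {n r : ℕ}

/-- A polynomial of degree `≤ 2r+1` minus its `2r+1`-point interpolant is a multiple of
the nodal polynomial. -/
lemma sub_interp_eq_nodal (hn : 1 ≤ n) (hr : 1 ≤ r) (j : ℕ) {P : Polynomial ℝ}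
    (hdeg : P.natDegree ≤ 2 * r + 1) :
    P - Lagrange.interpolate (Finset.range (2 * r + 1)) (tau n r j)
        (fun i => P.eval (tau n r j i))
      = Polynomial.C (P.coeff (2 * r + 1))
          * Lagrange.nodal (Finset.range (2 * r + 1)) (tau n r j) := by
  have hvs : Set.InjOn (tau n r j) (Finset.range (2 * r + 1)) := tau_injOn hn hr j
  set q := Lagrange.interpolate (Finset.range (2 * r + 1)) (tau n r j)
    (fun i => P.eval (tau n r j i)) with hq
  set c := P.coeff (2 * r + 1) with hc
  set Φ := Lagrange.nodal (Finset.range (2 * r + 1)) (tau n r j) with hΦ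
  have hqdeg : q.degree < (2 * r + 1 : ℕ) := by
    rw [hq]
    have := Lagrange.degree_interpolate_lt (r := fun i => P.eval (tau n r j i)) hvs
    simpa using this
  have hΦdeg : Φ.natDegree = 2 * r + 1 := by
    rw [hΦ, Lagrange.natDegree_nodal, Finset.card_range]
  have hΦmonic : Φ.Monic := Lagrange.nodal_monic
  have hE : P - q - Polynomial.C c * Φ = 0 := by
    apply Polynomial.eq_zero_of_degree_lt_of_eval_index_eq_zero _ hvs
    · rw [Finset.card_range]
      rw [Polynomial.degree_lt_iff_coeff_zero]
      intro m hm
      have hm' : 2 * r + 1 ≤ m := by exact_mod_cast hm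
      rw [Polynomial.coeff_sub, Polynomial.coeff_sub, Polynomial.coeff_C_mul]
      have hqm : q.coeff m = 0 := by
        apply Polynomial.coeff_eq_zero_of_degree_lt
        calc q.degree < (2 * r + 1 : ℕ) := hqdeg
          _ ≤ m := by exact_mod_cast hm'
      rcases Nat.eq_or_lt_of_le hm' with heq | hlt
      · have hΦm : Φ.coeff m = 1 := by
          rw [← heq, ← hΦdeg]
          exact hΦmonic.coeff_natDegree
        rw [hqm, hΦm, ← heq, ← hc]
        ring
      · have hPm : P.coeff m = 0 :=
          Polynomial.coeff_eq_zero_of_natDegree_lt (lt_of_le_of_lt hdeg hlt)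
        have hΦm : Φ.coeff m = 0 :=
          Polynomial.coeff_eq_zero_of_natDegree_lt (by rw [hΦdeg]; exact hlt)
        rw [hPm, hqm, hΦm]
        ring
    · intro i hi
      rw [Polynomial.eval_sub, Polynomial.eval_sub, Polynomial.eval_mul]
      have h1 : q.eval (tau n r j i) = P.eval (tau n r j i) := by
        rw [hq]
        exact Lagrange.eval_interpolate_at_node _ hvs hi
      have h2 : Φ.eval (tau n r j i) = 0 := by
        rw [hΦ]
        exact Lagrange.eval_nodal_at_node hi
      rw [h1, h2]
      ring
  linear_combination hE
end Factor
section IntervalBound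

variable {n r : ℕ}

lemma taylor_err (hn : 1 ≤ n) (hr : 1 ≤ r) {x : ℝ → ℝ}
    (hx : ContDiffOn ℝ (2*r+2 : ℕ) x (Icc 0 1)) {j : ℕ} (hj1 : 1 ≤ j) (hjn : j ≤ n) :
    ∀ t ∈ Icc (((j:ℝ)-1)/n) (((j:ℝ)-1)/n + 1/n),
      |x t - (taylorPoly x (2*r+1) (Icc (((j:ℝ)-1)/n) (((j:ℝ)-1)/n + 1/n)) (((j:ℝ)-1)/n)).eval t|
        ≤ cknorm (2*r+2) x * (1/n)^(2*r+2) := by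
  have hnpos : (0:ℝ) < n := by exact_mod_cast hn
  set a := ((j:ℝ)-1)/n with ha
  set b' := a + 1/n with hb
  have hab : a < b' := by rw [hb]; have : (0:ℝ) < 1/n := by positivity
                          linarith
  have hsub : Icc a b' ⊆ Icc 0 1 := subint_mem_Icc01 hn hr hj1 hjn
  set Mx := cknorm (2*r+2) x with hMx
  have htrans : ∀ i, i ≤ 2*r+2 → ∀ y ∈ Icc a b',
      iteratedDerivWithin i x (Icc a b') y = iteratedDerivWithin i x (Icc 0 1) y :=
    fun i hi y hy => eqOn_iteratedDerivWithin hsub (uniqueDiffOn_Icc hab)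
      (uniqueDiffOn_Icc one_pos) hx i hi hy
  intro t ht
  have hbound : ∀ y ∈ Icc a b', ‖iteratedDerivWithin (2*r+1+1) x (Icc a b') y‖ ≤ Mx := by
    intro y hy
    rw [Real.norm_eq_abs, show 2*r+1+1 = 2*r+2 by ring, htrans (2*r+2) le_rfl y hy]
    exact abs_iteratedDerivWithin_le_cknorm le_rfl hx (hsub hy)
  have hcd : ContDiffOn ℝ (2*r+1+1 : ℕ) x (Icc a b') := by
    have e : (2*r+1+1 : ℕ) = 2*r+2 := by ring
    rw [e]; exact hx.mono hsub
  have := taylor_mean_remainder_bound hab.le hcd ht hbound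
  rw [Real.norm_eq_abs] at this
  rw [taylorPoly_eval]
  refine this.trans ?_
  have hfact : (1:ℝ) ≤ ((2*r+1).factorial : ℝ) := by exact_mod_cast (2*r+1).factorial_pos
  have h1 : Mx * (t - a) ^ (2*r+1+1) ≤ Mx * (1/n)^(2*r+2) := by
    apply mul_le_mul_of_nonneg_left _ (cknorm_nonneg hx)
    rw [show 2*r+1+1 = 2*r+2 by ring]
    have htb : t ≤ a + 1/n := hb ▸ ht.2
    apply pow_le_pow_left₀ (by linarith [ht.1]) (by linarith [htb])
  have hMx0 : 0 ≤ Mx := cknorm_nonneg hx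
  calc Mx * (t - a) ^ (2*r+1+1) / ((2*r+1).factorial : ℝ)
      ≤ Mx * (t - a) ^ (2*r+1+1) :=
        div_le_self (mul_nonneg hMx0 (pow_nonneg (by linarith [ht.1]) _)) hfact
    _ ≤ Mx * (1/n)^(2*r+2) := h1

end IntervalBound
section IntervalBound2

variable {n r : ℕ}

lemma interval_bound (hn : 1 ≤ n) (hr : 1 ≤ r) {x : ℝ → ℝ}
    (hx : ContDiffOn ℝ (2*r+2 : ℕ) x (Icc 0 1)) {j : ℕ} (hj1 : 1 ≤ j) (hjn : j ≤ n)
    {g gt : ℝ → ℝ} {C₂ : ℝ} (hC₂ : 0 ≤ C₂)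
    (hgc : ContinuousOn g (Icc 0 1))
    (hgd : ∀ t ∈ Icc (0:ℝ) 1, HasDerivWithinAt g (gt t) (Icc 0 1) t)
    (hgb : ∀ t ∈ Icc (0:ℝ) 1, |g t| ≤ C₂)
    (hgtb : ∀ t ∈ Icc (0:ℝ) 1, |gt t| ≤ C₂) :
    |∫ t in (((j:ℝ)-1)/n)..((((j:ℝ)-1)/n) + 1/n), g t * (x t - (interpPoly n r j x).eval t)|
      ≤ C₂ * (2 + (2*r+1)*(2*r:ℝ)^(2*r)) * cknorm (2*r+2) x * (1/n)^(2*r+2) * (1/n) := by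
  have hnpos : (0:ℝ) < n := by exact_mod_cast hn
  set a := ((j:ℝ)-1)/n with ha
  set b' := a + 1/n with hb
  have hinv : (0:ℝ) < 1/n := by positivity
  have hab : a < b' := by rw [hb]; linarith
  have hba : b' - a = 1/n := by rw [hb]; ring
  have habs : |b' - a| = 1/n := by rw [hba, abs_of_pos hinv]
  have hsub : Icc a b' ⊆ Icc 0 1 := subint_mem_Icc01 hn hr hj1 hjn
  have hIocIcc : Set.uIoc a b' ⊆ Icc a b' := by
    rw [Set.uIoc_of_le hab.le]; exact Ioc_subset_Icc_self
  set Mx := cknorm (2*r+2) x with hMx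
  have hMx0 : 0 ≤ Mx := cknorm_nonneg hx
  set Λ : ℝ := (2*r+1) * (2*r:ℝ)^(2*r) with hΛ
  have hΛ0 : 0 ≤ Λ := by positivity
  set P : Polynomial ℝ := taylorPoly x (2*r+1) (Icc a b') a with hP
  set Pq : Polynomial ℝ := Lagrange.interpolate (Finset.range (2*r+1)) (tau n r j)
    (fun i => P.eval (tau n r j i)) with hPq
  set q : Polynomial ℝ := interpPoly n r j x with hq
  set c : ℝ := P.coeff (2*r+1) with hc
  -- Taylor error bound
  have TE : ∀ t ∈ Icc a b', |x t - P.eval t| ≤ Mx * (1/n)^(2*r+2) :=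
    taylor_err hn hr hx hj1 hjn
  -- coefficient bound
  have hcb : |c| ≤ Mx := by
    rw [hc, hP, taylorPoly_coeff_top]
    have htr : iteratedDerivWithin (2*r+1) x (Icc a b') a
        = iteratedDerivWithin (2*r+1) x (Icc 0 1) a :=
      eqOn_iteratedDerivWithin hsub (uniqueDiffOn_Icc hab) (uniqueDiffOn_Icc one_pos)
        hx (2*r+1) (by omega) (left_mem_Icc.mpr hab.le)
    rw [abs_div, htr]
    have h1 : |iteratedDerivWithin (2*r+1) x (Icc 0 1) a| ≤ Mx :=
      abs_iteratedDerivWithin_le_cknorm (by omega) hx (hsub (left_mem_Icc.mpr hab.le))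
    have hfact : (1:ℝ) ≤ |((2*r+1).factorial : ℝ)| := by
      rw [abs_of_pos (by exact_mod_cast (2*r+1).factorial_pos)]
      exact_mod_cast (2*r+1).factorial_pos
    calc |iteratedDerivWithin (2*r+1) x (Icc 0 1) a| / |((2*r+1).factorial : ℝ)|
        ≤ |iteratedDerivWithin (2*r+1) x (Icc 0 1) a| := div_le_self (abs_nonneg _) hfact
      _ ≤ Mx := h1
  -- factorization
  have hfac : P - Pq = Polynomial.C c * Lagrange.nodal (Finset.range (2*r+1)) (tau n r j) :=
    sub_interp_eq_nodal hn hr j (by rw [hP]; exact taylorPoly_natDegree_le _ _ _ _)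
  have hev : ∀ t : ℝ, P.eval t - Pq.eval t
      = c * ∏ i ∈ Finset.range (2*r+1), (t - tau n r j i) := by
    intro t
    have h := congrArg (Polynomial.eval t) hfac
    rwa [Polynomial.eval_sub, Polynomial.eval_mul, Polynomial.eval_C,
      Lagrange.eval_nodal] at h
  -- interpolant of taylor error
  have hiq : ∀ t ∈ Icc a b', |Pq.eval t - q.eval t| ≤ Λ * (Mx * (1/n)^(2*r+2)) := by
    intro t ht
    have hsubq : Pq - q = Lagrange.interpolate (Finset.range (2*r+1)) (tau n r j)
        ((fun i => P.eval (tau n r j i)) - (fun i => x (tau n r j i))) := by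
      rw [map_sub]
      rfl
    have hvals : ∀ i ∈ Finset.range (2*r+1),
        |((fun i => P.eval (tau n r j i)) - (fun i => x (tau n r j i))) i|
          ≤ Mx * (1/n)^(2*r+2) := by
      intro i hi
      have hile : i ≤ 2*r := Nat.lt_succ_iff.mp (Finset.mem_range.mp hi)
      have hτ := tau_mem_Icc hn hr (j := j) hile
      have := TE _ hτ
      rw [Pi.sub_apply]
      rw [abs_sub_comm]
      exact this
    have := interp_eval_bound hn hr j hvals ht
    rw [← hsubq] at this
    rw [Polynomial.eval_sub] at this
    exact this.trans_eq (by rw [hΛ])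
  -- continuity facts
  have hgc' : ContinuousOn g (Icc a b') := hgc.mono hsub
  have hxc : ContinuousOn x (Icc a b') := hx.continuousOn.mono hsub
  have huIcc : Set.uIcc a b' = Icc a b' := Set.uIcc_of_le hab.le
  have hint : ∀ f : ℝ → ℝ, ContinuousOn f (Icc a b') → IntervalIntegrable f volume a b' := by
    intro f hf
    apply ContinuousOn.intervalIntegrable
    rwa [huIcc]
  have hPc : ContinuousOn (fun t => P.eval t) (Icc a b') := P.continuous_aeval.continuousOn
  have hPqc : ContinuousOn (fun t => Pq.eval t) (Icc a b') := Pq.continuous_aeval.continuousOn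
  have hqc : ContinuousOn (fun t => q.eval t) (Icc a b') := q.continuous_aeval.continuousOn
  have hint1 : IntervalIntegrable (fun t => g t * (x t - P.eval t)) volume a b' :=
    hint _ (hgc'.mul (hxc.sub hPc))
  have hint2 : IntervalIntegrable (fun t => g t * (P.eval t - Pq.eval t)) volume a b' :=
    hint _ (hgc'.mul (hPc.sub hPqc))
  have hint3 : IntervalIntegrable (fun t => g t * (Pq.eval t - q.eval t)) volume a b' :=
    hint _ (hgc'.mul (hPqc.sub hqc))
  -- split integral
  have hsplit : (∫ t in a..b', g t * (x t - q.eval t))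
      = (∫ t in a..b', g t * (x t - P.eval t))
        + ((∫ t in a..b', g t * (P.eval t - Pq.eval t))
          + (∫ t in a..b', g t * (Pq.eval t - q.eval t))) := by
    rw [← intervalIntegral.integral_add hint2 hint3,
      ← intervalIntegral.integral_add hint1 (hint2.add hint3)]
    apply intervalIntegral.integral_congr
    intro t _
    simp only [Pi.add_apply]
    ring
  -- bound T1
  have hT1 : |∫ t in a..b', g t * (x t - P.eval t)| ≤ C₂ * (Mx * (1/n)^(2*r+2)) * (1/n) := by
    have := intervalIntegral.norm_integral_le_of_norm_le_const
      (C := C₂ * (Mx * (1/n)^(2*r+2))) (f := fun t => g t * (x t - P.eval t))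
      (a := a) (b := b') ?_
    · rw [Real.norm_eq_abs] at this
      rw [habs] at this
      exact this
    · intro t ht
      have ht' : t ∈ Icc a b' := hIocIcc ht
      rw [Real.norm_eq_abs, abs_mul]
      exact mul_le_mul (hgb t (hsub ht')) (TE t ht') (abs_nonneg _) hC₂
  -- bound T3
  have hT3 : |∫ t in a..b', g t * (Pq.eval t - q.eval t)|
      ≤ C₂ * (Λ * (Mx * (1/n)^(2*r+2))) * (1/n) := by
    have := intervalIntegral.norm_integral_le_of_norm_le_const
      (C := C₂ * (Λ * (Mx * (1/n)^(2*r+2)))) (f := fun t => g t * (Pq.eval t - q.eval t))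
      (a := a) (b := b') ?_
    · rw [Real.norm_eq_abs, habs] at this
      exact this
    · intro t ht
      have ht' : t ∈ Icc a b' := hIocIcc ht
      rw [Real.norm_eq_abs, abs_mul]
      exact mul_le_mul (hgb t (hsub ht')) (hiq t ht') (abs_nonneg _) hC₂
  -- bound T2
  have hT2 : |∫ t in a..b', g t * (P.eval t - Pq.eval t)|
      ≤ C₂ * (Mx * (1/n)^(2*r+2)) * (1/n) := by
    have hΦc : ContinuousOn (fun t => ∏ i ∈ Finset.range (2*r+1), (t - tau n r j i))
        (Icc a b') := by
      apply Continuous.continuousOn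
      apply continuous_finset_prod
      intro i _
      exact continuous_id.sub continuous_const
    have heq1 : (∫ t in a..b', g t * (P.eval t - Pq.eval t))
        = c * ∫ t in a..b', g t * ∏ i ∈ Finset.range (2*r+1), (t - tau n r j i) := by
      rw [← intervalIntegral.integral_const_mul]
      apply intervalIntegral.integral_congr
      intro t _
      show g t * (P.eval t - Pq.eval t) = c * (g t * ∏ i ∈ Finset.range (2*r+1), (t - tau n r j i))
      rw [hev t]
      ring
    have heq2 : (∫ t in a..b', g t * ∏ i ∈ Finset.range (2*r+1), (t - tau n r j i))
        = (∫ t in a..b', (g t - g a) * ∏ i ∈ Finset.range (2*r+1), (t - tau n r j i))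
          + ∫ t in a..b', g a * ∏ i ∈ Finset.range (2*r+1), (t - tau n r j i) := by
      rw [← intervalIntegral.integral_add (hint (fun t => (g t - g a) * ∏ i ∈ Finset.range (2*r+1), (t - tau n r j i)) ((hgc'.sub continuousOn_const).mul hΦc))
        (hint (fun t => g a * ∏ i ∈ Finset.range (2*r+1), (t - tau n r j i)) (continuousOn_const.mul hΦc))]
      apply intervalIntegral.integral_congr
      intro t _
      simp only [Pi.add_apply]
      ring
    have heq3 : (∫ t in a..b', g a * ∏ i ∈ Finset.range (2*r+1), (t - tau n r j i)) = 0 := by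
      rw [intervalIntegral.integral_const_mul]
      rw [show b' = a + 1/n from hb, show a = ((j:ℝ)-1)/n from ha]
      rw [phi_integral_zero hn hr j]
      ring
    have hmvt : ∀ t ∈ Icc a b', |g t - g a| ≤ C₂ * (1/n) := by
      intro t ht
      have h := (convex_Icc (0:ℝ) 1).norm_image_sub_le_of_norm_hasDerivWithin_le
        hgd (fun u hu => by rw [Real.norm_eq_abs]; exact hgtb u hu)
        (hsub (left_mem_Icc.mpr hab.le)) (hsub ht)
      rw [Real.norm_eq_abs, Real.norm_eq_abs] at h
      refine h.trans ?_
      apply mul_le_mul_of_nonneg_left _ hC₂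
      rw [abs_of_nonneg (by linarith [ht.1])]
      have := ht.2
      rw [hb] at this
      linarith
    have hmain : |∫ t in a..b', (g t - g a) * ∏ i ∈ Finset.range (2*r+1), (t - tau n r j i)|
        ≤ (C₂ * (1/n) * (1/n)^(2*r+1)) * (1/n) := by
      have := intervalIntegral.norm_integral_le_of_norm_le_const
        (C := C₂ * (1/n) * (1/n)^(2*r+1))
        (f := fun t => (g t - g a) * ∏ i ∈ Finset.range (2*r+1), (t - tau n r j i))
        (a := a) (b := b') ?_
      · rw [Real.norm_eq_abs, habs] at this
        exact this
      · intro t ht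
        have ht' : t ∈ Icc a b' := hIocIcc ht
        rw [Real.norm_eq_abs, abs_mul]
        exact mul_le_mul (hmvt t ht') (phi_bound hn hr ht') (abs_nonneg _) (by positivity)
    rw [heq1, heq2, heq3, add_zero, abs_mul]
    calc |c| * |∫ t in a..b', (g t - g a) * ∏ i ∈ Finset.range (2*r+1), (t - tau n r j i)|
        ≤ Mx * ((C₂ * (1/n) * (1/n)^(2*r+1)) * (1/n)) :=
          mul_le_mul hcb hmain (abs_nonneg _) hMx0
      _ = C₂ * (Mx * (1/n)^(2*r+2)) * (1/n) := by ring
  -- combine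
  have hq' : ∀ t : ℝ, x t - (interpPoly n r j x).eval t = x t - q.eval t := fun t => rfl
  calc |∫ t in a..b', g t * (x t - (interpPoly n r j x).eval t)|
      = |(∫ t in a..b', g t * (x t - P.eval t))
          + ((∫ t in a..b', g t * (P.eval t - Pq.eval t))
            + (∫ t in a..b', g t * (Pq.eval t - q.eval t)))| := by rw [← hsplit]
    _ ≤ |∫ t in a..b', g t * (x t - P.eval t)|
          + (|∫ t in a..b', g t * (P.eval t - Pq.eval t)|
            + |∫ t in a..b', g t * (Pq.eval t - q.eval t)|) := by
          apply (abs_add_le _ _).trans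
          gcongr
          exact abs_add_le _ _
    _ ≤ C₂ * (Mx * (1/n)^(2*r+2)) * (1/n)
          + (C₂ * (Mx * (1/n)^(2*r+2)) * (1/n)
            + C₂ * (Λ * (Mx * (1/n)^(2*r+2))) * (1/n)) := by
          exact add_le_add hT1 (add_le_add hT2 hT3)
    _ = C₂ * (2 + Λ) * Mx * (1/n)^(2*r+2) * (1/n) := by ring

end IntervalBound2
section Split

variable {n r : ℕ}

lemma crude_bound (hn : 1 ≤ n) (hr : 1 ≤ r) {x : ℝ → ℝ}
    (hx : ContDiffOn ℝ (2*r+2 : ℕ) x (Icc 0 1)) {j : ℕ} (hj1 : 1 ≤ j) (hjn : j ≤ n)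
    {t : ℝ} (ht : t ∈ Icc (((j:ℝ)-1)/n) (((j:ℝ)-1)/n + 1/n)) :
    |x t - (interpPoly n r j x).eval t|
      ≤ (1 + (2*r+1)*(2*r:ℝ)^(2*r)) * cknorm (2*r+2) x := by
  have hsub : Icc (((j:ℝ)-1)/n) (((j:ℝ)-1)/n + 1/n) ⊆ Icc 0 1 := subint_mem_Icc01 hn hr hj1 hjn
  set Mx := cknorm (2*r+2) x with hMx
  have hxb : ∀ u ∈ Icc (0:ℝ) 1, |x u| ≤ Mx := by
    intro u hu
    have := abs_iteratedDerivWithin_le_cknorm (k := 2*r+2) (i := 0) (by omega) hx hu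
    simpa using this
  have hvals : ∀ i ∈ Finset.range (2*r+1), |x (tau n r j i)| ≤ Mx := by
    intro i hi
    have hile : i ≤ 2*r := Nat.lt_succ_iff.mp (Finset.mem_range.mp hi)
    exact hxb _ (hsub (tau_mem_Icc hn hr hile))
  have hint := interp_eval_bound hn hr j hvals ht
  have : |x t - (interpPoly n r j x).eval t| ≤ |x t| + |(interpPoly n r j x).eval t| :=
    abs_sub _ _
  refine this.trans ?_
  have h1 := hxb t (hsub ht)
  unfold interpPoly
  calc |x t| + |(Lagrange.interpolate (Finset.range (2*r+1)) (tau n r j)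
          (fun i => x (tau n r j i))).eval t|
      ≤ Mx + (2*r+1) * (2*r:ℝ)^(2*r) * Mx := add_le_add h1 hint
    _ = (1 + (2*r+1)*(2*r:ℝ)^(2*r)) * Mx := by ring

lemma integral_split (hn : 1 ≤ n) (hr : 1 ≤ r) {x : ℝ → ℝ}
    (hxc : ContinuousOn x (Icc 0 1)) {φ : ℝ → ℝ} (hφ : ContinuousOn φ (Icc 0 1)) :
    IntervalIntegrable (fun t => φ t * (x t - Qn n r x t)) volume 0 1 ∧
    (∫ t in (0:ℝ)..1, φ t * (x t - Qn n r x t))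
      = ∑ k ∈ Finset.range n,
          ∫ t in (((k+1:ℕ):ℝ)-1)/n..((((k+1:ℕ):ℝ)-1)/n + 1/n),
            φ t * (x t - (interpPoly n r (k+1) x).eval t) := by
  have hnpos : (0:ℝ) < n := by exact_mod_cast hn
  have h1n : (0:ℝ) < 1/n := by positivity
  set ψ : ℕ → ℝ := fun k => (k:ℝ)/n with hψ
  have hψs : ∀ k : ℕ, ψ (k+1) = ψ k + 1/n := by
    intro k; rw [hψ]; push_cast; field_simp
  have hψe : ∀ k : ℕ, ψ k = (((k+1:ℕ):ℝ)-1)/n := by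
    intro k; rw [hψ]; push_cast; ring_nf
  set E : ℝ → ℝ := fun t => φ t * (x t - Qn n r x t) with hE
  set G : ℕ → ℝ → ℝ := fun k t => φ t * (x t - (interpPoly n r (k+1) x).eval t) with hG
  have hae : ∀ k : ℕ, k < n → ∀ᵐ t ∂(volume : Measure ℝ),
      t ∈ Set.uIoc (ψ k) (ψ (k+1)) → E t = G k t := by
    intro k hk
    have hne : ∀ᵐ t ∂(volume : Measure ℝ), t ≠ ψ (k+1) := by
      rw [MeasureTheory.ae_iff]
      have : {t : ℝ | ¬ t ≠ ψ (k+1)} = {ψ (k+1)} := by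
        ext t; simp
      rw [this]
      exact Real.volume_singleton
    filter_upwards [hne] with t ht hmem
    have hlt : ψ k < ψ (k+1) := by rw [hψs]; linarith [h1n]
    rw [Set.uIoc_of_le hlt.le] at hmem
    have hIoo : t ∈ Ioo (ψ k) (ψ (k+1)) := ⟨hmem.1, lt_of_le_of_ne hmem.2 ht⟩
    have hq : Qn n r x t = (interpPoly n r (k+1) x).eval t := by
      apply qn_eq_interp hn (Nat.le_add_left 1 k) (by omega)
      rw [← hψe k]
      rw [← hψs k]
      exact hIoo
    rw [hE, hG]
    simp only
    rw [hq]
  have hGint : ∀ k : ℕ, k < n → IntervalIntegrable (G k) volume (ψ k) (ψ (k+1)) := by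
    intro k hk
    have hlt : ψ k < ψ (k+1) := by rw [hψs]; linarith [h1n]
    have hsub : Icc (ψ k) (ψ (k+1)) ⊆ Icc 0 1 := by
      rw [hψe k, hψs k, hψe k]
      exact subint_mem_Icc01 hn hr (Nat.le_add_left 1 k) (by omega)
    apply ContinuousOn.intervalIntegrable
    rw [Set.uIcc_of_le hlt.le]
    exact ((hφ.mono hsub).mul ((hxc.mono hsub).sub
      (Polynomial.continuous_aeval _).continuousOn))
  have hEint : ∀ k : ℕ, k < n → IntervalIntegrable E volume (ψ k) (ψ (k+1)) := by
    intro k hk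
    have hg := hGint k hk
    rw [intervalIntegrable_iff] at hg ⊢
    have hcongr : G k =ᵐ[volume.restrict (Set.uIoc (ψ k) (ψ (k+1)))] E := by
      filter_upwards [ae_restrict_of_ae (hae k hk), ae_restrict_mem measurableSet_uIoc]
        with t h1 h2
      exact (h1 h2).symm
    exact hg.congr hcongr
  constructor
  · have := IntervalIntegrable.trans_iterate (a := ψ) (n := n) (f := E) (μ := volume) hEint
    have hψ0 : ψ 0 = 0 := by rw [hψ]; simp
    have hψn : ψ n = 1 := by rw [hψ]; field_simp
    rwa [hψ0, hψn] at this
  · have hsum := intervalIntegral.sum_integral_adjacent_intervals (a := ψ) (n := n)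
      (f := E) (μ := volume) hEint
    have hψ0 : ψ 0 = 0 := by rw [hψ]; simp
    have hψn : ψ n = 1 := by rw [hψ]; field_simp
    rw [hψ0, hψn] at hsum
    rw [← hsum]
    apply Finset.sum_congr rfl
    intro k hk
    have hk' : k < n := Finset.mem_range.mp hk
    have h1 : (∫ t in (ψ k)..(ψ (k+1)), E t) = ∫ t in (ψ k)..(ψ (k+1)), G k t :=
      intervalIntegral.integral_congr_ae (hae k hk')
    rw [h1, hψe k, hψs k, hψe k]

end Split

/-- If all mixed partials `D^{(α,β)}κ` (given by the family `κd`) of total order `≤ 2r+3`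
exist, are continuous on `[0,1]²`, and are bounded by `C₂`, then there is a constant
`C₃ > 0` depending only on `r` and `C₂` (independent of `n`) such that
`‖(K(x − Q_n x))^{(2r+1)}‖_∞ ≤ C₃ ‖x‖_{2r+2,∞} h^{2r+2}` for all `x ∈ C^{2r+2}[0,1]`. -/
theorem stmt_11 (r : ℕ) (hr : 1 ≤ r) (C₂ : ℝ) (hC₂ : 0 < C₂) :
    ∃ C₃ : ℝ, 0 < C₃ ∧
      ∀ κ : ℝ → ℝ → ℝ, ∀ κd : ℕ → ℕ → ℝ → ℝ → ℝ,
        κd 0 0 = κ →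
        (∀ α β : ℕ, α + β + 1 ≤ 2 * r + 3 → ∀ t ∈ Set.Icc (0:ℝ) 1, ∀ s ∈ Set.Icc (0:ℝ) 1,
          HasDerivWithinAt (fun u => κd α β u t) (κd (α + 1) β s t) (Set.Icc 0 1) s) →
        (∀ α β : ℕ, α + β + 1 ≤ 2 * r + 3 → ∀ s ∈ Set.Icc (0:ℝ) 1, ∀ t ∈ Set.Icc (0:ℝ) 1,
          HasDerivWithinAt (fun u => κd α β s u) (κd α (β + 1) s t) (Set.Icc 0 1) t) →
        (∀ α β : ℕ, α + β ≤ 2 * r + 3 →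
          ContinuousOn (fun q : ℝ × ℝ => κd α β q.1 q.2) (Set.Icc 0 1 ×ˢ Set.Icc 0 1)) →
        (∀ α β : ℕ, α + β ≤ 2 * r + 3 →
          ∀ s ∈ Set.Icc (0:ℝ) 1, ∀ t ∈ Set.Icc (0:ℝ) 1, |κd α β s t| ≤ C₂) →
        ∀ n : ℕ, 1 ≤ n → ∀ x : ℝ → ℝ, ContDiffOn ℝ (2 * r + 2) x (Set.Icc 0 1) →
          supNorm (iteratedDerivWithin (2 * r + 1)
              (Kop κ (fun t => x t - Qn n r x t)) (Set.Icc 0 1)) ≤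
            C₃ * cknorm (2 * r + 2) x * ((1 : ℝ) / n) ^ (2 * r + 2) := by
  set Λ : ℝ := (2*r+1) * (2*r:ℝ)^(2*r) with hΛ
  have hΛ0 : 0 ≤ Λ := by positivity
  refine ⟨C₂ * (2 + Λ), by positivity, ?_⟩
  intro κ κd hκ0 hd1 hd2 hcont hbound n hn x hx0
  subst hκ0
  have hnpos : (0:ℝ) < n := by exact_mod_cast hn
  have h1n : (0:ℝ) < 1/n := by positivity
  have hx : ContDiffOn ℝ (2*r+2 : ℕ) x (Icc 0 1) := by exact_mod_cast hx0
  set Mx := cknorm (2*r+2) x with hMx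
  have hMx0 : 0 ≤ Mx := cknorm_nonneg hx
  set e : ℝ → ℝ := fun t => x t - Qn n r x t with he
  set F : ℕ → ℝ → ℝ := fun α s => ∫ t in (0:ℝ)..1, κd α 0 s t * e t with hF
  -- continuity of slices
  have hslice : ∀ α β : ℕ, α + β ≤ 2*r+3 → ∀ s ∈ Icc (0:ℝ) 1,
      ContinuousOn (fun t => κd α β s t) (Icc 0 1) := by
    intro α β hαβ s hs
    have h1 : ContinuousOn (fun t : ℝ => ((s, t) : ℝ × ℝ)) (Icc 0 1) :=
      (continuous_const.prodMk continuous_id).continuousOn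
    exact (hcont α β hαβ).comp h1 (fun t ht => ⟨hs, ht⟩)
  have hxc : ContinuousOn x (Icc 0 1) := hx.continuousOn
  -- derivative of F
  have hFd : ∀ α : ℕ, α ≤ 2*r → ∀ s ∈ Icc (0:ℝ) 1,
      HasDerivWithinAt (F α) (F (α+1) s) (Icc 0 1) s := by
    intro α hα s hs
    set B : ℝ := (1 + Λ) * Mx with hB
    have hB0 : 0 ≤ B := by positivity
    -- quantitative bound
    have hquad : ∀ s' ∈ Icc (0:ℝ) 1,
        |F α s' - F α s - (s' - s) * F (α+1) s| ≤ (C₂ * B) * |s' - s|^2 := by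
      intro s' hs'
      set φc : ℝ → ℝ := fun t =>
        κd α 0 s' t - κd α 0 s t - (s' - s) * κd (α+1) 0 s t with hφc
      have hφcc : ContinuousOn φc (Icc 0 1) := by
        apply ContinuousOn.sub
        apply ContinuousOn.sub
        · exact hslice α 0 (by omega) s' hs'
        · exact hslice α 0 (by omega) s hs
        · exact continuousOn_const.mul (hslice (α+1) 0 (by omega) s hs)
      -- pointwise double-MVT bound
      have hpt : ∀ t ∈ Icc (0:ℝ) 1, |φc t| ≤ C₂ * |s' - s|^2 := by
        intro t ht
        set S : Set ℝ := Icc (min s s') (max s s') with hS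
        have hSsub : S ⊆ Icc (0:ℝ) 1 := by
          rw [hS]
          apply Icc_subset_Icc
          · exact le_min hs.1 hs'.1
          · exact max_le hs.2 hs'.2
        have hmemS : ∀ u ∈ S, |u - s| ≤ |s' - s| := by
          intro u hu
          rcases le_total s s' with hss | hss
          · rw [hS, min_eq_left hss, max_eq_right hss] at hu
            rw [abs_of_nonneg (by linarith [hu.1]), abs_of_nonneg (by linarith)]
            linarith [hu.2]
          · rw [hS, min_eq_right hss, max_eq_left hss] at hu
            rw [abs_of_nonpos (by linarith [hu.2]), abs_of_nonpos (by linarith)]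
            linarith [hu.1]
        have hinner : ∀ u ∈ S, |κd (α+1) 0 u t - κd (α+1) 0 s t| ≤ C₂ * |s' - s| := by
          intro u hu
          have h := (convex_Icc (0:ℝ) 1).norm_image_sub_le_of_norm_hasDerivWithin_le
            (f := fun u => κd (α+1) 0 u t) (f' := fun u => κd (α+2) 0 u t) (C := C₂)
            (fun v hv => hd1 (α+1) 0 (by omega) t ht v hv)
            (fun v hv => by rw [Real.norm_eq_abs]; exact hbound (α+2) 0 (by omega) v hv t ht)
            hs (hSsub hu)
          rw [Real.norm_eq_abs, Real.norm_eq_abs] at h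
          calc |κd (α+1) 0 u t - κd (α+1) 0 s t| ≤ C₂ * |u - s| := h
            _ ≤ C₂ * |s' - s| := by
                apply mul_le_mul_of_nonneg_left (hmemS u hu) hC₂.le
        have hD : ∀ u ∈ S, HasDerivWithinAt
            (fun u => κd α 0 u t - κd α 0 s t - (u - s) * κd (α+1) 0 s t)
            (κd (α+1) 0 u t - κd (α+1) 0 s t) S u := by
          intro u hu
          have h1 := ((hd1 α 0 (by omega) t ht u (hSsub hu)).mono hSsub).sub_const
            (κd α 0 s t)
          have h2 : HasDerivWithinAt (fun u => (u - s) * κd (α+1) 0 s t)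
              (κd (α+1) 0 s t) S u := by
            have := ((hasDerivWithinAt_id u S).sub_const s).mul_const (κd (α+1) 0 s t)
            simpa using this
          exact h1.sub h2
        have hsS : s ∈ S := by
          rw [hS]; exact ⟨min_le_left _ _, le_max_left _ _⟩
        have hs'S : s' ∈ S := by
          rw [hS]; exact ⟨min_le_right _ _, le_max_right _ _⟩
        have h := (convex_Icc (min s s') (max s s')).norm_image_sub_le_of_norm_hasDerivWithin_le
          hD (fun v hv => by rw [Real.norm_eq_abs]; exact hinner v hv) hsS hs'S
        rw [Real.norm_eq_abs, Real.norm_eq_abs] at h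
        simp only [sub_self, zero_mul, mul_zero, sub_zero] at h
        calc |φc t| = |κd α 0 s' t - κd α 0 s t - (s' - s) * κd (α+1) 0 s t| := by
              rw [hφc]
          _ ≤ C₂ * |s' - s| * |s' - s| := h
          _ = C₂ * |s' - s|^2 := by ring
      -- combine integrals
      have hI1 := integral_split (n := n) (r := r) hn hr hxc (hslice α 0 (by omega) s' hs')
      have hI2 := integral_split (n := n) (r := r) hn hr hxc (hslice α 0 (by omega) s hs)
      have hI3 := integral_split (n := n) (r := r) hn hr hxc
        (hslice (α+1) 0 (by omega) s hs)
      have hIφ := integral_split (n := n) (r := r) hn hr hxc hφcc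
      have hlin : F α s' - F α s - (s' - s) * F (α+1) s
          = ∫ t in (0:ℝ)..1, φc t * e t := by
        rw [hF]
        simp only
        rw [← intervalIntegral.integral_const_mul,
          ← intervalIntegral.integral_sub hI1.1 hI2.1,
          ← intervalIntegral.integral_sub (hI1.1.sub hI2.1) (hI3.1.const_mul (s' - s))]
        apply intervalIntegral.integral_congr
        intro t _
        rw [hφc]
        simp only
        ring
      rw [hlin, hIφ.2]
      have hterm : ∀ k ∈ Finset.range n,
          |∫ t in ((((k+1:ℕ):ℝ)-1)/n)..((((k+1:ℕ):ℝ)-1)/n + 1/n),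
            φc t * (x t - (interpPoly n r (k+1) x).eval t)|
          ≤ (C₂ * |s' - s|^2 * B) * (1/n) := by
        intro k hk
        have hk' : k < n := Finset.mem_range.mp hk
        have hsub : Icc ((((k+1:ℕ):ℝ)-1)/n) ((((k+1:ℕ):ℝ)-1)/n + 1/n) ⊆ Icc (0:ℝ) 1 :=
          subint_mem_Icc01 hn hr (Nat.le_add_left 1 k) (by omega)
        have hIoc : Set.uIoc ((((k+1:ℕ):ℝ)-1)/n) ((((k+1:ℕ):ℝ)-1)/n + 1/n)
            ⊆ Icc ((((k+1:ℕ):ℝ)-1)/n) ((((k+1:ℕ):ℝ)-1)/n + 1/n) := by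
          rw [Set.uIoc_of_le (by linarith)]
          exact Ioc_subset_Icc_self
        have := intervalIntegral.norm_integral_le_of_norm_le_const
          (C := C₂ * |s' - s|^2 * B)
          (f := fun t => φc t * (x t - (interpPoly n r (k+1) x).eval t))
          (a := (((k+1:ℕ):ℝ)-1)/n) (b := (((k+1:ℕ):ℝ)-1)/n + 1/n) ?_
        · rw [Real.norm_eq_abs] at this
          refine this.trans_eq ?_
          congr 1
          rw [show ((((k+1:ℕ):ℝ)-1)/n + 1/n) - ((((k+1:ℕ):ℝ)-1)/n) = 1/n by ring,
            abs_of_pos h1n]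
        · intro t htm
          have ht' := hIoc htm
          rw [Real.norm_eq_abs, abs_mul]
          apply mul_le_mul (hpt t (hsub ht'))
            (crude_bound hn hr hx (Nat.le_add_left 1 k) (by omega) ht')
            (abs_nonneg _) (by positivity)
      calc |∑ k ∈ Finset.range n,
            ∫ t in ((((k+1:ℕ):ℝ)-1)/n)..((((k+1:ℕ):ℝ)-1)/n + 1/n),
              φc t * (x t - (interpPoly n r (k+1) x).eval t)|
          ≤ ∑ k ∈ Finset.range n,
            |∫ t in ((((k+1:ℕ):ℝ)-1)/n)..((((k+1:ℕ):ℝ)-1)/n + 1/n),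
              φc t * (x t - (interpPoly n r (k+1) x).eval t)| :=
            Finset.abs_sum_le_sum_abs _ _
        _ ≤ ∑ _k ∈ Finset.range n, (C₂ * |s' - s|^2 * B) * (1/n) :=
            Finset.sum_le_sum hterm
        _ = n * ((C₂ * |s' - s|^2 * B) * (1/n)) := by
            rw [Finset.sum_const, Finset.card_range]; simp [nsmul_eq_mul]
        _ = (C₂ * B) * |s' - s|^2 := by field_simp
    -- little-o argument
    rw [hasDerivWithinAt_iff_isLittleO]
    rw [Asymptotics.isLittleO_iff]
    intro ε hε
    set ε' : ℝ := ε / (C₂ * B + 1) with hε'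
    have hε'0 : 0 < ε' := by positivity
    have hev1 : ∀ᶠ s' in nhdsWithin s (Icc (0:ℝ) 1), |s' - s| ≤ ε' := by
      apply Filter.Eventually.filter_mono nhdsWithin_le_nhds
      have hball : Metric.ball s ε' ∈ nhds s := Metric.ball_mem_nhds s hε'0
      filter_upwards [hball] with u hu
      rw [Metric.mem_ball, Real.dist_eq] at hu
      exact hu.le
    have hev2 : ∀ᶠ s' in nhdsWithin s (Icc (0:ℝ) 1), s' ∈ Icc (0:ℝ) 1 :=
      eventually_mem_nhdsWithin
    filter_upwards [hev1, hev2] with s' h1 h2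
    have hq := hquad s' h2
    rw [Real.norm_eq_abs, Real.norm_eq_abs, smul_eq_mul]
    have : |F α s' - F α s - (s' - s) * F (α+1) s| ≤ (C₂ * B) * |s' - s|^2 := hq
    calc |F α s' - F α s - (s' - s) * F (α+1) s| ≤ (C₂ * B) * |s' - s|^2 := hq
      _ = ((C₂ * B) * |s' - s|) * |s' - s| := by ring
      _ ≤ (((C₂ * B + 1)) * ε') * |s' - s| := by
          apply mul_le_mul_of_nonneg_right _ (abs_nonneg _)
          apply mul_le_mul (by linarith) h1 (abs_nonneg _) (by positivity)
      _ ≤ ε * |s' - s| := by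
          apply mul_le_mul_of_nonneg_right _ (abs_nonneg _)
          rw [hε']
          rw [mul_div_cancel₀]
          positivity
  -- iterated derivative identity
  have hiter : ∀ k : ℕ, k ≤ 2*r+1 →
      Set.EqOn (iteratedDerivWithin k (F 0) (Icc 0 1)) (F k) (Icc 0 1) := by
    intro k
    induction k with
    | zero => intro _ y hy; simp
    | succ m ih =>
      intro hm y hy
      have hm' : m ≤ 2*r+1 := by omega
      rw [iteratedDerivWithin_succ]
      have h1 : derivWithin (iteratedDerivWithin m (F 0) (Icc 0 1)) (Icc 0 1) y
          = derivWithin (F m) (Icc 0 1) y :=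
        derivWithin_congr (ih hm') (ih hm' hy)
      rw [h1]
      exact (hFd m (by omega) y hy).derivWithin (uniqueDiffOn_Icc one_pos y hy)
  -- final bound on F (2r+1)
  have hfinal : ∀ s ∈ Icc (0:ℝ) 1, |F (2*r+1) s| ≤ C₂ * (2 + Λ) * Mx * (1/n)^(2*r+2) := by
    intro s hs
    have hsp := integral_split (n := n) (r := r) hn hr hxc
      (hslice (2*r+1) 0 (by omega) s hs)
    rw [hF]
    simp only
    rw [hsp.2]
    have hterm : ∀ k ∈ Finset.range n,
        |∫ t in ((((k+1:ℕ):ℝ)-1)/n)..((((k+1:ℕ):ℝ)-1)/n + 1/n),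
          κd (2*r+1) 0 s t * (x t - (interpPoly n r (k+1) x).eval t)|
        ≤ C₂ * (2 + Λ) * Mx * (1/n)^(2*r+2) * (1/n) := by
      intro k hk
      have hk' : k < n := Finset.mem_range.mp hk
      have := interval_bound (n := n) (r := r) hn hr hx (Nat.le_add_left 1 k) (by omega)
        (g := fun t => κd (2*r+1) 0 s t) (gt := fun t => κd (2*r+1) 1 s t) hC₂.le
        (hslice (2*r+1) 0 (by omega) s hs)
        (fun t ht => hd2 (2*r+1) 0 (by omega) s hs t ht)
        (fun t ht => hbound (2*r+1) 0 (by omega) s hs t ht)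
        (fun t ht => hbound (2*r+1) 1 (by omega) s hs t ht)
      exact this
    calc |∑ k ∈ Finset.range n,
          ∫ t in ((((k+1:ℕ):ℝ)-1)/n)..((((k+1:ℕ):ℝ)-1)/n + 1/n),
            κd (2*r+1) 0 s t * (x t - (interpPoly n r (k+1) x).eval t)|
        ≤ ∑ k ∈ Finset.range n,
          |∫ t in ((((k+1:ℕ):ℝ)-1)/n)..((((k+1:ℕ):ℝ)-1)/n + 1/n),
            κd (2*r+1) 0 s t * (x t - (interpPoly n r (k+1) x).eval t)| :=
          Finset.abs_sum_le_sum_abs _ _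
      _ ≤ ∑ _k ∈ Finset.range n, C₂ * (2 + Λ) * Mx * (1/n)^(2*r+2) * (1/n) :=
          Finset.sum_le_sum hterm
      _ = n * (C₂ * (2 + Λ) * Mx * (1/n)^(2*r+2) * (1/n)) := by
          rw [Finset.sum_const, Finset.card_range]; simp [nsmul_eq_mul]
      _ = C₂ * (2 + Λ) * Mx * (1/n)^(2*r+2) := by field_simp
  -- conclude
  have hKop : Kop (κd 0 0) (fun t => x t - Qn n r x t) = F 0 := rfl
  rw [hKop]
  have hsup : supNorm (iteratedDerivWithin (2*r+1) (F 0) (Icc 0 1))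
      ≤ C₂ * (2 + Λ) * Mx * (1/n)^(2*r+2) := by
    unfold supNorm
    apply ciSup_le
    intro t
    rw [hiter (2*r+1) le_rfl t.2]
    exact hfinal t.1 t.2
  calc supNorm (iteratedDerivWithin (2*r+1) (F 0) (Icc 0 1))
      ≤ C₂ * (2 + Λ) * Mx * (1/n)^(2*r+2) := hsup
    _ = C₂ * (2 + Λ) * cknorm (2*r+2) x * ((1:ℝ)/n)^(2*r+2) := by rw [hMx]
end

section
/- (Lemma 4, first estimate, concrete form) Suppose all partial derivatives D^{(α,β)}κ = ∂^{α+β}κ/∂s^α∂t^β with 0 ≤ α+β ≤ 2r+3 exist, are continuous on [0,1]×[0,1], and satisfy |D^{(α,β)}κ(s,t)| ≤ C₂. Then there exists a constant C > 0, independent of n, such that for every continuous ψ : [0,1] → ℝ, ‖K(Kψ) − Q_n(K(Kψ))‖_∞ ≤ C ‖ψ‖_∞ h^{2r+1}. -/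
open Set MeasureTheory

lemma aux_contDiffOn (r : ℕ) (κd : ℕ → ℕ → ℝ → ℝ → ℝ)
    (hds : ∀ α β : ℕ, α + β + 1 ≤ 2 * r + 3 → ∀ t ∈ Set.Icc (0:ℝ) 1, ∀ s ∈ Set.Icc (0:ℝ) 1,
      HasDerivWithinAt (fun u => κd α β u t) (κd (α + 1) β s t) (Set.Icc 0 1) s)
    (hcont : ∀ α β : ℕ, α + β ≤ 2 * r + 3 →
      ContinuousOn (fun q : ℝ × ℝ => κd α β q.1 q.2) (Set.Icc 0 1 ×ˢ Set.Icc 0 1))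
    (t : ℝ) (ht : t ∈ Set.Icc (0:ℝ) 1) :
    ∀ k α : ℕ, α + k ≤ 2 * r + 3 → ContDiffOn ℝ k (fun s => κd α 0 s t) (Set.Icc 0 1) := by
  intro k
  induction k with
  | zero =>
    intro α hα
    rw [show ((0:ℕ) : WithTop ℕ∞) = 0 from rfl, contDiffOn_zero]
    exact (hcont α 0 (by omega)).comp
      (continuous_id.prodMk continuous_const).continuousOn (fun s hs => ⟨hs, ht⟩)
  | succ k ih =>
    intro α hα
    have hu : UniqueDiffOn ℝ (Set.Icc (0:ℝ) 1) := uniqueDiffOn_Icc one_pos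
    rw [show ((k + 1 : ℕ) : WithTop ℕ∞) = (k : WithTop ℕ∞) + 1 by push_cast; rfl,
      contDiffOn_succ_iff_derivWithin hu]
    refine ⟨fun s hs => (hds α 0 (by omega) t ht s hs).differentiableWithinAt, ?_, ?_⟩
    · intro h; simp at h
    · exact (ih (α + 1) (by omega)).congr fun s hs =>
        (hds α 0 (by omega) t ht s hs).derivWithin (hu s hs)

lemma aux_iteratedDeriv (r : ℕ) (κd : ℕ → ℕ → ℝ → ℝ → ℝ)
    (hds : ∀ α β : ℕ, α + β + 1 ≤ 2 * r + 3 → ∀ t ∈ Set.Icc (0:ℝ) 1, ∀ s ∈ Set.Icc (0:ℝ) 1,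
      HasDerivWithinAt (fun u => κd α β u t) (κd (α + 1) β s t) (Set.Icc 0 1) s)
    {a b : ℝ} (hab : a < b) (hsub : Set.Icc a b ⊆ Set.Icc (0:ℝ) 1)
    (t : ℝ) (ht : t ∈ Set.Icc (0:ℝ) 1) :
    ∀ α : ℕ, α ≤ 2 * r + 3 → ∀ y ∈ Set.Icc a b,
      iteratedDerivWithin α (fun s => κd 0 0 s t) (Set.Icc a b) y = κd α 0 y t := by
  intro α
  induction α with
  | zero => intro _ y _; simp
  | succ α ih =>
    intro hα y hy
    rw [iteratedDerivWithin_succ,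
      derivWithin_congr (fun z hz => ih (by omega) z hz) (ih (by omega) y hy)]
    exact ((hds α 0 (by omega) t ht y (hsub hy)).mono hsub).derivWithin
      ((uniqueDiffOn_Icc hab) y hy)

section Aux

lemma aux_supNorm_bd {ψ : ℝ → ℝ} (hψ : ContinuousOn ψ (Set.Icc 0 1)) :
    ∀ u ∈ Set.Icc (0:ℝ) 1, |ψ u| ≤ supNorm ψ := by
  intro u hu
  have hbdd : BddAbove (Set.range fun t : Set.Icc (0:ℝ) 1 => |ψ t.1|) := by
    have h1 : Set.range (fun t : Set.Icc (0:ℝ) 1 => |ψ t.1|)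
        = (fun u => |ψ u|) '' Set.Icc (0:ℝ) 1 := by
      ext x; simp
    rw [h1]
    exact (isCompact_Icc.image_of_continuousOn hψ.abs).bddAbove
  exact le_ciSup hbdd (⟨u, hu⟩ : Set.Icc (0:ℝ) 1)

end Aux

/-- Lemma 4, first estimate: `‖K(Kψ) − Q_n(K(Kψ))‖_∞ ≤ C ‖ψ‖_∞ h^{2r+1}` with `C` independent of `n`. -/
theorem stmt_14 (r : ℕ) (hr : 1 ≤ r)
    (κ : ℝ → ℝ → ℝ) (κd : ℕ → ℕ → ℝ → ℝ → ℝ) (C₂ : ℝ) (hC₂ : 0 < C₂)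
    (hκ0 : κd 0 0 = κ)
    (hds : ∀ α β : ℕ, α + β + 1 ≤ 2 * r + 3 → ∀ t ∈ Set.Icc (0:ℝ) 1, ∀ s ∈ Set.Icc (0:ℝ) 1,
      HasDerivWithinAt (fun u => κd α β u t) (κd (α + 1) β s t) (Set.Icc 0 1) s)
    (hdt : ∀ α β : ℕ, α + β + 1 ≤ 2 * r + 3 → ∀ s ∈ Set.Icc (0:ℝ) 1, ∀ t ∈ Set.Icc (0:ℝ) 1,
      HasDerivWithinAt (fun u => κd α β s u) (κd α (β + 1) s t) (Set.Icc 0 1) t)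
    (hcont : ∀ α β : ℕ, α + β ≤ 2 * r + 3 →
      ContinuousOn (fun q : ℝ × ℝ => κd α β q.1 q.2) (Set.Icc 0 1 ×ˢ Set.Icc 0 1))
    (hbd : ∀ α β : ℕ, α + β ≤ 2 * r + 3 →
      ∀ s ∈ Set.Icc (0:ℝ) 1, ∀ t ∈ Set.Icc (0:ℝ) 1, |κd α β s t| ≤ C₂)
    :
    ∃ C : ℝ, 0 < C ∧
      ∀ n : ℕ, 1 ≤ n → ∀ ψ : ℝ → ℝ, ContinuousOn ψ (Set.Icc 0 1) →
        supNorm (fun t => Kop κ (Kop κ ψ) t - Qn n r (Kop κ (Kop κ ψ)) t) ≤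
          C * supNorm ψ * ((1 : ℝ) / n) ^ (2 * r + 1) := by
  subst hκ0
  set κ : ℝ → ℝ → ℝ := κd 0 0 with hκdef
  have hrR : (1:ℝ) ≤ (r:ℝ) := by exact_mod_cast hr
  refine ⟨(1 + (2*(r:ℝ)+1) * (2*(r:ℝ))^(2*r)) * C₂ * C₂, by positivity, ?_⟩
  intro n hn ψ hψ
  have hn0 : (0:ℝ) < n := by exact_mod_cast hn
  have hψbd : ∀ u ∈ Set.Icc (0:ℝ) 1, |ψ u| ≤ supNorm ψ := aux_supNorm_bd hψ
  have hsupψ0 : (0:ℝ) ≤ supNorm ψ := Real.iSup_nonneg fun t => abs_nonneg _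
  set y : ℝ → ℝ := Kop κ ψ with hydef
  have hκbd : ∀ u ∈ Set.Icc (0:ℝ) 1, ∀ w ∈ Set.Icc (0:ℝ) 1, |κ u w| ≤ C₂ :=
    hbd 0 0 (by omega)
  have hκcont : ContinuousOn (fun q : ℝ × ℝ => κ q.1 q.2) (Set.Icc 0 1 ×ˢ Set.Icc 0 1) :=
    hcont 0 0 (by omega)
  have hκsec : ∀ w ∈ Set.Icc (0:ℝ) 1, ContinuousOn (fun u => κ w u) (Set.Icc 0 1) :=
    fun w hw => hκcont.comp (continuous_const.prodMk continuous_id).continuousOn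
      (fun u hu => ⟨hw, hu⟩)
  -- bound on y
  have hybd : ∀ u ∈ Set.Icc (0:ℝ) 1, |y u| ≤ C₂ * supNorm ψ := by
    intro u hu
    have := intervalIntegral.norm_integral_le_of_norm_le_const (C := C₂ * supNorm ψ)
      (f := fun w => κ u w * ψ w) (a := 0) (b := 1) ?_
    · simpa [hydef, Kop] using this
    · intro w hw
      rw [Set.uIoc_of_le (by norm_num : (0:ℝ) ≤ 1)] at hw
      have hw' : w ∈ Set.Icc (0:ℝ) 1 := ⟨hw.1.le, hw.2⟩
      rw [Real.norm_eq_abs, abs_mul]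
      exact mul_le_mul (hκbd u hu w hw') (hψbd w hw') (abs_nonneg _) hC₂.le
  -- measurability of y on (0,1]
  have hymeas : AEStronglyMeasurable y (volume.restrict (Set.Ioc (0:ℝ) 1)) := by
    have hFcont : ContinuousOn (fun q : ℝ × ℝ => κ q.1 q.2 * ψ q.2)
        (Set.Icc 0 1 ×ˢ Set.Icc 0 1) :=
      hκcont.mul (hψ.comp continuous_snd.continuousOn (fun q hq => hq.2))
    have hFm : AEStronglyMeasurable (fun q : ℝ × ℝ => κ q.1 q.2 * ψ q.2)
        ((volume.restrict (Set.Ioc (0:ℝ) 1)).prod (volume.restrict (Set.Ioc (0:ℝ) 1))) := by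
      have h1 : AEStronglyMeasurable (fun q : ℝ × ℝ => κ q.1 q.2 * ψ q.2)
          (volume.restrict (Set.Icc (0:ℝ) 1 ×ˢ Set.Icc (0:ℝ) 1)) :=
        hFcont.aestronglyMeasurable (measurableSet_Icc.prod measurableSet_Icc)
      rw [Measure.prod_restrict, ← Measure.volume_eq_prod ℝ ℝ]
      exact h1.mono_measure (Measure.restrict_mono
        (Set.prod_mono Set.Ioc_subset_Icc_self Set.Ioc_subset_Icc_self) le_rfl)
    have h2 := hFm.integral_prod_right'
    have h3 : y = fun u => ∫ w, κ u w * ψ w ∂(volume.restrict (Set.Ioc (0:ℝ) 1)) := by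
      funext u
      rw [hydef]
      simp only [Kop]
      rw [intervalIntegral.integral_of_le (by norm_num : (0:ℝ) ≤ 1)]
    rw [h3]
    exact h2
  -- integrability of κ w · * y on [0,1]
  have hintg : ∀ w ∈ Set.Icc (0:ℝ) 1, IntervalIntegrable (fun u => κ w u * y u) volume 0 1 := by
    intro w hw
    rw [intervalIntegrable_iff_integrableOn_Ioc_of_le (by norm_num : (0:ℝ) ≤ 1)]
    refine ⟨?_, HasFiniteIntegral.restrict_of_bounded (C := C₂ * (C₂ * supNorm ψ))
      measure_Ioc_lt_top ?_⟩
    · apply AEStronglyMeasurable.mul _ hymeas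
      exact ((hκsec w hw).aestronglyMeasurable measurableSet_Icc).mono_measure
        (Measure.restrict_mono Set.Ioc_subset_Icc_self le_rfl)
    · filter_upwards [ae_restrict_mem measurableSet_Ioc] with u hu
      have hu' : u ∈ Set.Icc (0:ℝ) 1 := ⟨hu.1.le, hu.2⟩
      rw [Real.norm_eq_abs, abs_mul]
      exact mul_le_mul (hκbd w hw u hu') (hybd u hu') (abs_nonneg _) hC₂.le
  -- reduce to a pointwise bound
  refine Real.iSup_le ?_ (by positivity)
  rintro ⟨s, hs⟩
  simp only
  set j : ℕ := min n (⌊s * (n : ℝ)⌋₊ + 1) with hjdef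
  have hj1 : 1 ≤ j := le_min hn (Nat.succ_le_succ (Nat.zero_le _))
  have hjn : j ≤ n := min_le_left _ _
  have hj1R : (1:ℝ) ≤ (j:ℝ) := by exact_mod_cast hj1
  have hjnR : (j:ℝ) ≤ (n:ℝ) := by exact_mod_cast hjn
  set a : ℝ := ((j:ℝ) - 1) / n with hadef
  set b : ℝ := (j:ℝ) / n with hbdef
  have hba : b - a = 1 / n := by rw [hadef, hbdef]; field_simp; ring
  have hab : a < b := by
    have : (0:ℝ) < b - a := by rw [hba]; positivity
    linarith
  have ha0 : (0:ℝ) ≤ a := by apply div_nonneg _ hn0.le; linarith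
  have hb1 : b ≤ 1 := by rw [hbdef, div_le_one hn0]; exact hjnR
  have hsubab : Set.Icc a b ⊆ Set.Icc (0:ℝ) 1 := Set.Icc_subset_Icc ha0 hb1
  have hsa : a ≤ s := by
    rw [hadef, div_le_iff₀ hn0]
    have h1 : (j:ℝ) ≤ (⌊s * (n : ℝ)⌋₊ : ℝ) + 1 := by
      exact_mod_cast Nat.cast_le.mpr (min_le_right n (⌊s * (n : ℝ)⌋₊ + 1))
    have h2 : ((⌊s * (n : ℝ)⌋₊ : ℝ)) ≤ s * n := Nat.floor_le (mul_nonneg hs.1 hn0.le)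
    linarith
  have hsb : s ≤ b := by
    rw [hbdef, le_div_iff₀ hn0]
    have h1 : s * n ≤ (n:ℝ) := by nlinarith [hs.2]
    have h2 : s * n < (⌊s * (n : ℝ)⌋₊ : ℝ) + 1 := Nat.lt_floor_add_one _
    have h3 : (j:ℝ) = min (n:ℝ) ((⌊s * (n : ℝ)⌋₊ : ℝ) + 1) := by
      rw [hjdef]; push_cast; rfl
    rw [h3]
    exact le_min h1 h2.le
  set v : ℕ → ℝ := tau n r j with hvdef
  have hvi : ∀ i : ℕ, v i = a + (i:ℝ) / (2 * r * n) := fun i => rfl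
  have h2rn : (0:ℝ) < 2 * r * n := by positivity
  have hv_mem : ∀ i ∈ Finset.range (2 * r + 1), v i ∈ Set.Icc a b := by
    intro i hi
    rw [Finset.mem_range] at hi
    have hi' : (i:ℝ) ≤ 2 * r := by exact_mod_cast Nat.lt_succ_iff.mp hi
    constructor
    · rw [hvi]; have : (0:ℝ) ≤ (i:ℝ) / (2 * r * n) := by positivity
      linarith
    · rw [hvi]
      have h4 : (i:ℝ) / (2 * r * n) ≤ 1 / n := by
        rw [div_le_div_iff₀ h2rn hn0]
        nlinarith
      linarith [hba]
  have hv_sub : ∀ i k : ℕ, v i - v k = ((i:ℝ) - (k:ℝ)) / (2 * r * n) := by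
    intro i k; rw [hvi, hvi]; ring
  have hv_inj : Set.InjOn v (Finset.range (2 * r + 1)) := by
    intro i _ k _ h
    have h1 : ((i:ℝ) - (k:ℝ)) / (2 * r * n) = 0 := by rw [← hv_sub, h, sub_self]
    have h2 : (i:ℝ) = (k:ℝ) := by
      field_simp at h1; linarith
    exact_mod_cast h2
  have hsep : ∀ i k : ℕ, i ≠ k → 1 / (2 * (r:ℝ) * n) ≤ |v i - v k| := by
    intro i k hik
    rw [hv_sub, abs_div, abs_of_pos h2rn, div_le_div_iff₀ h2rn h2rn]
    have h1 : (1:ℝ) ≤ |(i:ℝ) - (k:ℝ)| := by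
      have h2 : (1:ℤ) ≤ |(i:ℤ) - (k:ℤ)| :=
        Int.one_le_abs (sub_ne_zero.mpr (by exact_mod_cast hik))
      calc (1:ℝ) ≤ ((|(i:ℤ) - (k:ℤ)| : ℤ) : ℝ) := by exact_mod_cast h2
        _ = |(i:ℝ) - (k:ℝ)| := by push_cast; rfl
    nlinarith
  -- bound on the Lagrange basis polynomials
  have hLag : ∀ i ∈ Finset.range (2 * r + 1),
      |(Lagrange.basis (Finset.range (2 * r + 1)) v i).eval s| ≤ (2 * (r:ℝ)) ^ (2 * r) := by
    intro i hi
    rw [Lagrange.basis, Polynomial.eval_prod, Finset.abs_prod]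
    have hcard : ((Finset.range (2 * r + 1)).erase i).card = 2 * r := by
      rw [Finset.card_erase_of_mem hi, Finset.card_range]; omega
    calc ∏ k ∈ (Finset.range (2 * r + 1)).erase i,
          |(Lagrange.basisDivisor (v i) (v k)).eval s|
        ≤ ∏ _k ∈ (Finset.range (2 * r + 1)).erase i, (2 * (r:ℝ)) := by
          apply Finset.prod_le_prod (fun _ _ => abs_nonneg _)
          intro k hk
          rw [Finset.mem_erase] at hk
          have hkr := hk.2
          have hki : k ≠ i := hk.1
          have hsk : |s - v k| ≤ 1 / n := by
            have h5 := hv_mem k hkr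
            rw [abs_le]
            constructor <;> [linarith [h5.2, hba]; linarith [h5.1, hba]]
          have hvik : 1 / (2 * (r:ℝ) * n) ≤ |v i - v k| := hsep i k (Ne.symm hki)
          have hpos : (0:ℝ) < |v i - v k| := lt_of_lt_of_le (by positivity) hvik
          have heval : (Lagrange.basisDivisor (v i) (v k)).eval s
              = (v i - v k)⁻¹ * (s - v k) := by
            simp [Lagrange.basisDivisor]
          rw [heval, abs_mul, abs_inv]
          have hinv : |v i - v k|⁻¹ ≤ 2 * (r:ℝ) * n := by
            rw [inv_le_comm₀ hpos (by positivity)]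
            calc (2 * (r:ℝ) * n)⁻¹ = 1 / (2 * (r:ℝ) * n) := by rw [one_div]
              _ ≤ |v i - v k| := hvik
          calc |v i - v k|⁻¹ * |s - v k| ≤ (2 * (r:ℝ) * n) * (1 / n) := by
                apply mul_le_mul hinv hsk (abs_nonneg _) (by positivity)
            _ = 2 * (r:ℝ) := by field_simp
      _ = (2 * (r:ℝ)) ^ (2 * r) := by rw [Finset.prod_const, hcard]
  -- the pointwise kernel interpolation error bound
  have hinner : ∀ t ∈ Set.Icc (0:ℝ) 1,
      |κ s t - ∑ i ∈ Finset.range (2 * r + 1),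
        (Lagrange.basis (Finset.range (2 * r + 1)) v i).eval s * κ (v i) t|
      ≤ (1 + (2 * (r:ℝ) + 1) * (2 * (r:ℝ)) ^ (2 * r)) * C₂ * (1 / n) ^ (2 * r + 1) := by
    intro t ht
    set P : Polynomial ℝ := ∑ k ∈ Finset.range (2 * r + 1),
      Polynomial.C (κd k 0 a t / (k.factorial : ℝ)) * (Polynomial.X - Polynomial.C a) ^ k with hPdef
    have hPeval : ∀ u : ℝ, P.eval u = ∑ k ∈ Finset.range (2 * r + 1),
        κd k 0 a t / (k.factorial : ℝ) * (u - a) ^ k := by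
      intro u
      rw [hPdef, Polynomial.eval_finset_sum]
      exact Finset.sum_congr rfl fun k _ => by
        simp [Polynomial.eval_mul, Polynomial.eval_pow]
    have hPdeg : P.degree < ((Finset.range (2 * r + 1)).card : WithBot ℕ) := by
      rw [Finset.card_range]
      refine lt_of_le_of_lt (Polynomial.degree_sum_le _ _) ?_
      rw [Finset.sup_lt_iff (by exact_mod_cast WithBot.bot_lt_coe (2 * r + 1))]
      intro k hk
      rw [Finset.mem_range] at hk
      calc (Polynomial.C (κd k 0 a t / (k.factorial : ℝ)) *
            (Polynomial.X - Polynomial.C a) ^ k).degree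
          ≤ (Polynomial.C (κd k 0 a t / (k.factorial : ℝ))).degree
            + ((Polynomial.X - Polynomial.C a) ^ k).degree := Polynomial.degree_mul_le _ _
        _ ≤ 0 + ((Polynomial.X - Polynomial.C a) ^ k).degree :=
            add_le_add Polynomial.degree_C_le le_rfl
        _ = ((Polynomial.X - Polynomial.C a) ^ k).degree := by rw [zero_add]
        _ = (k : WithBot ℕ) := by
            rw [Polynomial.degree_pow, Polynomial.degree_X_sub_C]
            simp
        _ < ((2 * r + 1 : ℕ) : WithBot ℕ) := by exact_mod_cast hk
    have hiter := aux_iteratedDeriv r κd hds hab hsubab t ht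
    have hamem : a ∈ Set.Icc a b := ⟨le_refl a, hab.le⟩
    have hT : ∀ u : ℝ, taylorWithinEval (fun w => κd 0 0 w t) (2 * r) (Set.Icc a b) a u
        = P.eval u := by
      intro u
      rw [taylor_within_apply, hPeval]
      refine Finset.sum_congr rfl fun k hk => ?_
      rw [Finset.mem_range] at hk
      rw [hiter k (by omega) a hamem, smul_eq_mul]
      ring
    have hcd : ContDiffOn ℝ (2 * r + 1 : ℕ) (fun w => κd 0 0 w t) (Set.Icc a b) :=
      (aux_contDiffOn r κd hds hcont t ht (2 * r + 1) 0 (by omega)).mono hsubab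
    have hrem : ∀ u ∈ Set.Icc a b, |κd 0 0 u t - P.eval u| ≤ C₂ * (1 / n) ^ (2 * r + 1) := by
      intro u hu
      have hder : ∀ w ∈ Set.Icc a b,
          ‖iteratedDerivWithin (2 * r + 1) (fun w => κd 0 0 w t) (Set.Icc a b) w‖ ≤ C₂ := by
        intro w hw
        rw [Real.norm_eq_abs, hiter (2 * r + 1) (by omega) w hw]
        exact hbd (2 * r + 1) 0 (by omega) w (hsubab hw) t ht
      have := taylor_mean_remainder_bound (n := 2 * r) hab.le hcd hu hder
      rw [hT u, Real.norm_eq_abs] at this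
      refine le_trans this ?_
      have hfac : (1:ℝ) ≤ ((2 * r).factorial : ℝ) := by
        exact_mod_cast Nat.one_le_iff_ne_zero.mpr (Nat.factorial_ne_zero _)
      have hua : u - a ≤ 1 / n := by
        have := hu.2; linarith [hba]
      have hpow : (u - a) ^ (2 * r + 1) ≤ (1 / (n:ℝ)) ^ (2 * r + 1) :=
        pow_le_pow_left₀ (by linarith [hu.1]) hua _
      calc C₂ * (u - a) ^ (2 * r + 1) / ((2 * r).factorial : ℝ)
          ≤ C₂ * (1 / (n:ℝ)) ^ (2 * r + 1) / ((2 * r).factorial : ℝ) := by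
            apply div_le_div_of_nonneg_right ?_ (by positivity)
            exact mul_le_mul_of_nonneg_left hpow hC₂.le
        _ ≤ C₂ * (1 / (n:ℝ)) ^ (2 * r + 1) := by
            apply div_le_self (by positivity) hfac
    have hexact : P.eval s = ∑ i ∈ Finset.range (2 * r + 1),
        (Lagrange.basis (Finset.range (2 * r + 1)) v i).eval s * P.eval (v i) := by
      have h := Lagrange.eq_interpolate (v := v) hv_inj hPdeg
      conv_lhs => rw [h]
      rw [Lagrange.interpolate_apply, Polynomial.eval_finset_sum]
      exact Finset.sum_congr rfl fun i _ => by
        rw [Polynomial.eval_mul, Polynomial.eval_C]; ring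
    have hkey : κd 0 0 s t - ∑ i ∈ Finset.range (2 * r + 1),
          (Lagrange.basis (Finset.range (2 * r + 1)) v i).eval s * κd 0 0 (v i) t
        = (κd 0 0 s t - P.eval s) + ∑ i ∈ Finset.range (2 * r + 1),
          (Lagrange.basis (Finset.range (2 * r + 1)) v i).eval s
            * (P.eval (v i) - κd 0 0 (v i) t) := by
      have hsplit : ∑ i ∈ Finset.range (2 * r + 1),
          (Lagrange.basis (Finset.range (2 * r + 1)) v i).eval s
            * (P.eval (v i) - κd 0 0 (v i) t)
          = (∑ i ∈ Finset.range (2 * r + 1),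
              (Lagrange.basis (Finset.range (2 * r + 1)) v i).eval s * P.eval (v i))
            - ∑ i ∈ Finset.range (2 * r + 1),
              (Lagrange.basis (Finset.range (2 * r + 1)) v i).eval s * κd 0 0 (v i) t := by
        rw [← Finset.sum_sub_distrib]
        exact Finset.sum_congr rfl fun i _ => mul_sub _ _ _
      rw [hsplit, ← hexact]; ring
    rw [hkey]
    have hsmem : s ∈ Set.Icc a b := ⟨hsa, hsb⟩
    calc |(κd 0 0 s t - P.eval s) + ∑ i ∈ Finset.range (2 * r + 1),
            (Lagrange.basis (Finset.range (2 * r + 1)) v i).eval s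
              * (P.eval (v i) - κd 0 0 (v i) t)|
        ≤ |κd 0 0 s t - P.eval s| + |∑ i ∈ Finset.range (2 * r + 1),
            (Lagrange.basis (Finset.range (2 * r + 1)) v i).eval s
              * (P.eval (v i) - κd 0 0 (v i) t)| := abs_add_le _ _
      _ ≤ C₂ * (1 / n) ^ (2 * r + 1)
          + (2 * (r:ℝ) + 1) * ((2 * (r:ℝ)) ^ (2 * r) * (C₂ * (1 / n) ^ (2 * r + 1))) := by
          apply add_le_add (hrem s hsmem)
          refine le_trans (Finset.abs_sum_le_sum_abs _ _) ?_
          have hterm : ∀ i ∈ Finset.range (2 * r + 1),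
              |(Lagrange.basis (Finset.range (2 * r + 1)) v i).eval s
                * (P.eval (v i) - κd 0 0 (v i) t)|
              ≤ (2 * (r:ℝ)) ^ (2 * r) * (C₂ * (1 / n) ^ (2 * r + 1)) := by
            intro i hi
            rw [abs_mul]
            apply mul_le_mul (hLag i hi) ?_ (abs_nonneg _) (by positivity)
            rw [abs_sub_comm]
            exact hrem (v i) (hv_mem i hi)
          refine le_trans (Finset.sum_le_card_nsmul _ _ _ hterm) ?_
          rw [Finset.card_range, nsmul_eq_mul]
          apply mul_le_mul_of_nonneg_right _ (by positivity)
          push_cast; ring_nf; rfl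
      _ = (1 + (2 * (r:ℝ) + 1) * (2 * (r:ℝ)) ^ (2 * r)) * C₂ * (1 / n) ^ (2 * r + 1) := by
          ring
  -- assemble
  have hsmem01 : s ∈ Set.Icc (0:ℝ) 1 := hs
  have hQeval : Qn n r (Kop κ y) s = ∑ i ∈ Finset.range (2 * r + 1),
      (Lagrange.basis (Finset.range (2 * r + 1)) v i).eval s * Kop κ y (v i) := by
    have h0 : Qn n r (Kop κ y) s = (interpPoly n r j (Kop κ y)).eval s := rfl
    rw [h0, interpPoly, Lagrange.interpolate_apply, Polynomial.eval_finset_sum]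
    exact Finset.sum_congr rfl fun i _ => by
      rw [Polynomial.eval_mul, Polynomial.eval_C]; ring
  have hintg_sum : IntervalIntegrable (fun u => ∑ i ∈ Finset.range (2 * r + 1),
      (Lagrange.basis (Finset.range (2 * r + 1)) v i).eval s * (κ (v i) u * y u))
      volume 0 1 := by
    have := IntervalIntegrable.sum (μ := volume) (a := (0:ℝ)) (b := 1)
      (Finset.range (2 * r + 1))
      (f := fun i => fun u => (Lagrange.basis (Finset.range (2 * r + 1)) v i).eval s
        * (κ (v i) u * y u))
      (fun i hi => ((hintg (v i) (hsubab (hv_mem i hi))).const_mul _))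
    have heq : (fun u => ∑ i ∈ Finset.range (2 * r + 1),
        (Lagrange.basis (Finset.range (2 * r + 1)) v i).eval s * (κ (v i) u * y u))
        = ∑ i ∈ Finset.range (2 * r + 1), fun u =>
          (Lagrange.basis (Finset.range (2 * r + 1)) v i).eval s * (κ (v i) u * y u) := by
      funext u; simp
    rw [heq]
    exact this
  have hEint : Kop κ y s - Qn n r (Kop κ y) s
      = ∫ u in (0:ℝ)..1, (κ s u - ∑ i ∈ Finset.range (2 * r + 1),
          (Lagrange.basis (Finset.range (2 * r + 1)) v i).eval s * κ (v i) u) * y u := by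
    rw [hQeval]
    have h1 : ∑ i ∈ Finset.range (2 * r + 1),
        (Lagrange.basis (Finset.range (2 * r + 1)) v i).eval s * Kop κ y (v i)
        = ∫ u in (0:ℝ)..1, ∑ i ∈ Finset.range (2 * r + 1),
            (Lagrange.basis (Finset.range (2 * r + 1)) v i).eval s * (κ (v i) u * y u) := by
      rw [intervalIntegral.integral_finset_sum
        (fun i hi => ((hintg (v i) (hsubab (hv_mem i hi))).const_mul _))]
      exact Finset.sum_congr rfl fun i _ =>
        (intervalIntegral.integral_const_mul _ _).symm
    rw [h1]
    have h2 : Kop κ y s = ∫ u in (0:ℝ)..1, κ s u * y u := rfl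
    rw [h2, ← intervalIntegral.integral_sub (hintg s hsmem01) hintg_sum]
    apply intervalIntegral.integral_congr
    intro u _
    dsimp only
    rw [sub_mul, Finset.sum_mul]
    congr 1
    exact Finset.sum_congr rfl fun i _ => by ring
  rw [hEint]
  have hbound := intervalIntegral.norm_integral_le_of_norm_le_const
    (C := (1 + (2 * (r:ℝ) + 1) * (2 * (r:ℝ)) ^ (2 * r)) * C₂ * (1 / n) ^ (2 * r + 1)
      * (C₂ * supNorm ψ))
    (f := fun u => (κ s u - ∑ i ∈ Finset.range (2 * r + 1),
      (Lagrange.basis (Finset.range (2 * r + 1)) v i).eval s * κ (v i) u) * y u)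
    (a := 0) (b := 1) ?_
  · rw [Real.norm_eq_abs] at hbound
    refine le_trans hbound (le_of_eq ?_)
    rw [show |(1:ℝ) - 0| = 1 by norm_num]
    ring
  · intro u hu
    rw [Set.uIoc_of_le (by norm_num : (0:ℝ) ≤ 1)] at hu
    have hu' : u ∈ Set.Icc (0:ℝ) 1 := ⟨hu.1.le, hu.2⟩
    rw [Real.norm_eq_abs, abs_mul]
    exact mul_le_mul (hinner u hu') (hybd u hu') (abs_nonneg _) (by positivity)
end
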